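/- arXiv:2106.07840 — 15 statements merged into one kernel-verified Lean document; each statement's English description precedes it below -/
import Mathlib

section
/- For any integer i with 4^{h-1}+1 ≤ i ≤ (4^h−1)/3, there exists an integer t with 1 ≤ t ≤ h−1 such that (i·4^t mod (4^h+1)) ≤ 4^{h-1}. -/
theorem stmt_0 (h : ℕ) (hh : 3 ≤ h) (i : ℕ)
    (h1 : 4 ^ (h - 1) + 1 ≤ i) (h2 : i ≤ (4 ^ h - 1) / 3) :
    ∃ t : ℕ, 1 ≤ t ∧ t ≤ h - 1 ∧ (i * 4 ^ t) % (4 ^ h + 1) ≤ 4 ^ (h - 1) := by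
  set n := 4 ^ h + 1 with hn
  have hpow : 4 ^ h = 4 * 4 ^ (h - 1) := by
    conv_lhs => rw [show h = (h - 1) + 1 by omega]
    ring
  have hp1' : 1 ≤ 4 ^ (h - 1) := Nat.one_le_pow _ _ (by norm_num)
  have h3i : 3 * i ≤ 4 ^ h - 1 := by
    have := (Nat.le_div_iff_mul_le (by norm_num : 0 < 3)).mp h2
    omega
  have key : ∀ t, t ≤ h - 1 →
      (∃ s, 1 ≤ s ∧ s ≤ t ∧ (i * 4 ^ s) % n ≤ 4 ^ (h - 1)) ∨
      (4 ^ (h - 1) < (i * 4 ^ t) % n ∧ 3 * ((i * 4 ^ t) % n) + 2 * 4 ^ t ≤ 4 ^ h + 1) := by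
    intro t
    induction t with
    | zero =>
      intro _
      right
      have hi : i % n = i := Nat.mod_eq_of_lt (by omega)
      simp only [pow_zero, mul_one, hi]
      omega
    | succ t ih =>
      intro ht
      rcases ih (by omega) with ⟨s, hs1, hs2, hs3⟩ | ⟨hlo, hhi⟩
      · exact Or.inl ⟨s, hs1, by omega, hs3⟩
      · set r := (i * 4 ^ t) % n with hr
        have h4tpos : 1 ≤ 4 ^ t := Nat.one_le_pow _ _ (by norm_num)
        have hb : n ≤ 4 * r := by omega
        have hb2 : 4 * r - n < n := by omega
        have hmod : (i * 4 ^ (t + 1)) % n = 4 * r - n := by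
          have e1 : i * 4 ^ (t + 1) = 4 * (i * 4 ^ t) := by ring
          have h4 : (4 : ℕ) % n = 4 := Nat.mod_eq_of_lt (by omega)
          rw [e1, Nat.mul_mod, h4]
          show 4 * r % n = 4 * r - n
          rw [Nat.mod_eq_sub_mod hb, Nat.mod_eq_of_lt hb2]
        have h4e : (4 : ℕ) ^ (t + 1) = 4 * 4 ^ t := by ring
        by_cases hc : 4 * r - n ≤ 4 ^ (h - 1)
        · exact Or.inl ⟨t + 1, by omega, by omega, by rw [hmod]; exact hc⟩
        · right
          rw [hmod]
          omega
  rcases key (h - 1) le_rfl with ⟨s, hs1, hs2, hs3⟩ | ⟨hlo, hhi⟩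
  · exact ⟨s, hs1, hs2, hs3⟩
  · exfalso
    have hph : 4 ^ (h - 1) ≤ 4 ^ (h - 1) := le_rfl
    omega
end

section
/- For every integer i with 4^{h-1}+1 ≤ i ≤ δ, where δ = (4^h−1)/3, the 4-cyclotomic coset of i modulo n = 4^h+1 contains an element that is at most 4^{h-1}; consequently i belongs to T = ⋃_{j=0}^{4^{h-1}} C_j^{(4)}. -/
theorem stmt_1 (h : ℕ) (hh : 1 ≤ h) (i : ℕ)
    (h1 : 4 ^ (h - 1) + 1 ≤ i) (h2 : i ≤ (4 ^ h - 1) / 3) :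
    (∃ j : ℕ, (i * 4 ^ j) % (4 ^ h + 1) ≤ 4 ^ (h - 1)) ∧
      (∃ s ≤ 4 ^ (h - 1), ∃ j : ℕ, i = (s * 4 ^ j) % (4 ^ h + 1)) := by
  classical
  set n := 4 ^ h + 1 with hn
  have hpow : 4 ^ h = 4 * 4 ^ (h - 1) := by
    conv_lhs => rw [← Nat.sub_add_cancel hh]
    rw [pow_succ, mul_comm]
  have h3i : i * 3 ≤ 4 ^ h - 1 := (Nat.le_div_iff_mul_le (by norm_num)).mp h2
  have hin : i < n := by omega
  have hPex : ∃ m, ∃ j, (i * 4 ^ j) % n = m :=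
    ⟨i, 0, by simp [Nat.mod_eq_of_lt hin]⟩
  set m := Nat.find hPex with hmdef
  obtain ⟨j, hj⟩ := Nat.find_spec hPex
  have hmlei : m ≤ i := Nat.find_le ⟨0, by simp [Nat.mod_eq_of_lt hin]⟩
  have hmltn : m < n := by
    rw [hmdef, ← hj]; exact Nat.mod_lt _ (by omega)
  have hcong : (i * 4 ^ j) % n = m % n := by
    rw [hj, ← hmdef, Nat.mod_eq_of_lt hmltn]
  have hstep : ∀ k, (i * 4 ^ (j + k)) % n = (m * 4 ^ k) % n := fun k => by
    rw [pow_add, ← mul_assoc, Nat.mul_mod (i * 4 ^ j), hcong, ← Nat.mul_mod]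
  have hm : m ≤ 4 ^ (h - 1) := by
    by_contra hcon
    push_neg at hcon
    have hm1 : 1 ≤ m := by omega
    have hnegkey : m * 4 ^ h = (n - m) + (m - 1) * n := by
      rw [hn]
      zify [hm1, le_of_lt hmltn, show m ≤ 4 ^ h + 1 by omega]
      ring
    have hPnm : ∃ j, (i * 4 ^ j) % n = n - m := by
      refine ⟨j + h, ?_⟩
      rw [hstep h, hnegkey, Nat.add_mul_mod_self_right,
        Nat.mod_eq_of_lt (by omega)]
    have h2m : m ≤ n - m := by
      by_contra hc
      exact Nat.find_min hPex (by omega) hPnm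
    have h2m' : 2 * m ≤ 4 ^ h := by omega
    have hP4m : ∃ j, (i * 4 ^ j) % n = m * 4 - n := by
      refine ⟨j + 1, ?_⟩
      rw [hstep 1, pow_one, Nat.mod_eq_sub_mod (by omega),
        Nat.mod_eq_of_lt (by omega)]
    exact Nat.find_min hPex (show m * 4 - n < m by omega) hP4m
  have horder : 4 ^ (2 * h) % n = 1 := by
    have hsq : 4 ^ (2 * h) = (4 ^ h - 1) * n + 1 := by
      rw [two_mul, pow_add, hn]
      zify [Nat.one_le_pow h 4 (by norm_num)]
      ring
    rw [hsq, Nat.add_comm, Nat.add_mul_mod_self_right,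
      Nat.mod_eq_of_lt (by omega)]
  refine ⟨⟨j, by rw [hj]; exact hm⟩, m, hm, (2 * h - 1) * j, ?_⟩
  obtain ⟨k, hk⟩ : ∃ k, 2 * h = k + 1 := ⟨2 * h - 1, by omega⟩
  have hjj : j + (2 * h - 1) * j = 2 * h * j := by
    rw [hk, Nat.add_sub_cancel]; ring
  have e2h : 4 ^ (2 * h * j) % n = 1 := by
    rw [pow_mul, Nat.pow_mod, horder, one_pow, Nat.mod_eq_of_lt (by omega)]
  rw [← hstep, hjj, Nat.mul_mod, e2h, mul_one]
  simp [Nat.mod_eq_of_lt hin]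
end

section
/- The set T = ⋃_{i=0}^{4^{h-1}} C_i^{(4)} of 4-cyclotomic cosets modulo n = 4^h+1 contains both {0, 1, ..., (4^h−1)/3} and {n−1, n−2, ..., n−(4^h−1)/3}. -/
theorem stmt_2 (h : ℕ) (hh : 1 ≤ h) :
    let n := 4 ^ h + 1
    let T : Set ℕ := {x | ∃ i ≤ 4 ^ (h - 1), ∃ j : ℕ, x = (i * 4 ^ j) % n}
    (∀ a ≤ (4 ^ h - 1) / 3, a ∈ T) ∧
      (∀ i, 1 ≤ i → i ≤ (4 ^ h - 1) / 3 → n - i ∈ T) := by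
  intro n T
  have hn : n = 4 ^ h + 1 := rfl
  have h1 : 1 ≤ 4 ^ h := Nat.one_le_pow _ _ (by norm_num)
  have h4 : 4 * 4 ^ (h - 1) = 4 ^ h := by
    conv_rhs => rw [show h = (h - 1) + 1 by omega]
    rw [pow_succ]; ring
  have h3 : 3 ∣ 4 ^ h - 1 := by
    have hm : (4:ℕ) ^ h % 3 = 1 := by
      rw [Nat.pow_mod]; norm_num
    omega
  have hδ : 3 * ((4 ^ h - 1) / 3) = 4 ^ h - 1 := Nat.mul_div_cancel' h3
  have hpow : 4 ^ (2 * h) % n = 1 := by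
    obtain ⟨k, hk⟩ : ∃ k, 4 ^ h = k + 1 := ⟨4 ^ h - 1, by omega⟩
    have h2h : 4 ^ (2 * h) = 4 ^ h * 4 ^ h := by rw [two_mul, pow_add]
    have : 4 ^ (2 * h) = k * n + 1 := by rw [h2h, hk, hn, hk]; ring
    rw [this, Nat.add_comm, Nat.add_mul_mod_self_right]
    exact Nat.mod_eq_of_lt (by omega)
  have key : ∀ a, a ≤ (4 ^ h - 1) / 3 → a ∈ T := by
    intro a
    induction a using Nat.strong_induction_on with
    | _ a IH =>
      intro ha
      have h3a : 3 * a ≤ 4 ^ h - 1 := by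
        calc 3 * a ≤ 3 * ((4 ^ h - 1) / 3) := by omega
        _ = 4 ^ h - 1 := hδ
      have haln : a < n := by omega
      by_cases hc : a ≤ 4 ^ (h - 1)
      · exact ⟨a, hc, 0, by rw [pow_zero, mul_one, Nat.mod_eq_of_lt haln]⟩
      · push_neg at hc
        set a' := 4 * a - n with ha'
        have hsum : a' + n = 4 * a := by omega
        have ha'lt : a' < a := by omega
        have ha'le : a' ≤ (4 ^ h - 1) / 3 := by
          have : 3 * a' ≤ 4 ^ h - 1 := by omega
          omega
        obtain ⟨i, hi, j, hj⟩ := IH a' ha'lt ha'le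
        refine ⟨i, hi, j + (2 * h - 1), ?_⟩
        have hX : a' * 4 ^ (2 * h - 1) + n * 4 ^ (2 * h - 1) = a * 4 ^ (2 * h) := by
          have h2 : 4 ^ (2 * h) = 4 ^ (2 * h - 1) * 4 := by
            rw [← pow_succ]; congr 1; omega
          calc a' * 4 ^ (2 * h - 1) + n * 4 ^ (2 * h - 1)
              = (a' + n) * 4 ^ (2 * h - 1) := by ring
            _ = (4 * a) * 4 ^ (2 * h - 1) := by rw [hsum]
            _ = a * (4 ^ (2 * h - 1) * 4) := by ring
            _ = a * 4 ^ (2 * h) := by rw [← h2]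
        calc a = a % n := (Nat.mod_eq_of_lt haln).symm
          _ = (a % n * (4 ^ (2 * h) % n)) % n := by simp [hpow, Nat.mod_mod_of_dvd]
          _ = (a * 4 ^ (2 * h)) % n := by rw [← Nat.mul_mod]
          _ = (a' * 4 ^ (2 * h - 1) + n * 4 ^ (2 * h - 1)) % n := by rw [hX]
          _ = (a' * 4 ^ (2 * h - 1)) % n := by rw [Nat.add_mul_mod_self_left]
          _ = ((i * 4 ^ j) % n * 4 ^ (2 * h - 1)) % n := by rw [← hj]
          _ = (i * 4 ^ j * 4 ^ (2 * h - 1)) % n := by rw [Nat.mod_mul_mod]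
          _ = (i * 4 ^ (j + (2 * h - 1))) % n := by rw [pow_add, mul_assoc]
  constructor
  · exact key
  · intro i hi1 hiδ
    obtain ⟨k, hk, j, hj⟩ := key i hiδ
    have h3i : 3 * i ≤ 4 ^ h - 1 := by
      calc 3 * i ≤ 3 * ((4 ^ h - 1) / 3) := by omega
      _ = 4 ^ h - 1 := hδ
    have hin : i < n := by omega
    refine ⟨k, hk, j + h, ?_⟩
    have hstep : i * 4 ^ h = (n - i) + (i - 1) * n := by
      zify [hi1, show i ≤ n from le_of_lt hin, hn]
      rw [Nat.cast_sub (by omega)]; push_cast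
      ring
    calc n - i = (n - i) % n := (Nat.mod_eq_of_lt (by omega)).symm
      _ = ((n - i) + (i - 1) * n) % n := by rw [Nat.add_mul_mod_self_right]
      _ = (i * 4 ^ h) % n := by rw [← hstep]
      _ = ((i * 4 ^ h) % n) % n := (Nat.mod_mod_of_dvd _ dvd_rfl).symm
      _ = ((i % n) * (4 ^ h % n)) % n := by rw [← Nat.mul_mod, Nat.mod_mod_of_dvd _ dvd_rfl]
      _ = (((k * 4 ^ j) % n % n) * (4 ^ h % n)) % n := by rw [← hj]
      _ = ((k * 4 ^ j) * 4 ^ h) % n := by rw [Nat.mod_mod_of_dvd _ dvd_rfl, ← Nat.mul_mod]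
      _ = (k * 4 ^ (j + h)) % n := by rw [pow_add, mul_assoc]
end

section
/- The set T^c = { Σ_{i=0}^{h-1} a_i 4^i : a_0 ∈ {2,3}, a_i ∈ {1,2} for 1 ≤ i ≤ h−1 } is closed under multiplication by 4 modulo n = 4^h+1; that is, T^c is a union of 4-cyclotomic cosets modulo n. -/
lemma aux_sum_lt (m : ℕ) (c : ℕ → ℕ) (hc : ∀ i < m, c i ≤ 3) :
    ∑ i ∈ Finset.range m, c i * 4 ^ i < 4 ^ m := by
  induction m with
  | zero => simp
  | succ n ih =>
    rw [Finset.sum_range_succ, pow_succ]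
    have h1 := ih (fun i hi => hc i (by omega))
    have h2 := hc n (by omega)
    nlinarith [pow_pos (show (0:ℕ) < 4 by norm_num) n]

theorem stmt_3 (h : ℕ) (hh : 1 ≤ h) (a : ℕ)
    (ha : ∃ d : ℕ → ℕ, (d 0 = 2 ∨ d 0 = 3) ∧
      (∀ i, 1 ≤ i → i ≤ h - 1 → d i = 1 ∨ d i = 2) ∧
      a = ∑ i ∈ Finset.range h, d i * 4 ^ i) :
    ∃ d : ℕ → ℕ, (d 0 = 2 ∨ d 0 = 3) ∧
      (∀ i, 1 ≤ i → i ≤ h - 1 → d i = 1 ∨ d i = 2) ∧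
      (4 * a) % (4 ^ h + 1) = ∑ i ∈ Finset.range h, d i * 4 ^ i := by
  obtain ⟨d, hd0, hdi, rfl⟩ := ha
  rcases Nat.lt_or_ge h 2 with h1 | h2
  · -- h = 1
    have : h = 1 := by omega
    subst this
    refine ⟨fun _ => 5 - d 0, by simp; omega, by intro i hi1 hi2; omega, ?_⟩
    simp [Finset.sum_range_one]
    omega
  · -- h ≥ 2
    obtain ⟨k, rfl⟩ : ∃ k, h = k + 2 := ⟨h - 2, by omega⟩
    have hdk : d (k + 1) = 1 ∨ d (k + 1) = 2 := hdi (k + 1) (by omega) (by omega)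
    set e : ℕ → ℕ := fun i => if i = 0 then 4 - d (k + 1) else if i = 1 then d 0 - 1 else d (i - 1) with he
    have he0 : e 0 = 4 - d (k + 1) := by simp [he]
    have he1 : e 1 = d 0 - 1 := by simp [he]
    have he2 : ∀ i, e (i + 2) = d (i + 1) := by intro i; simp [he]
    refine ⟨e, by omega, ?_, ?_⟩
    · intro i h1i hik
      rcases Nat.lt_or_ge i 2 with hi2 | hi2
      · have : i = 1 := by omega
        subst this; omega
      · obtain ⟨j, rfl⟩ : ∃ j, i = j + 2 := ⟨i - 2, by omega⟩
        rw [he2]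
        exact hdi (j + 1) (by omega) (by omega)
    · have hlt : (∑ i ∈ Finset.range (k + 2), e i * 4 ^ i) < 4 ^ (k + 2) + 1 := by
        have := aux_sum_lt (k + 2) e (by
          intro i hi
          rcases Nat.lt_or_ge i 2 with hi2 | hi2
          · interval_cases i <;> omega
          · obtain ⟨j, rfl⟩ : ∃ j, i = j + 2 := ⟨i - 2, by omega⟩
            rw [he2]
            rcases hdi (j + 1) (by omega) (by omega) with h' | h' <;> omega)
        omega
      have hEq : 4 * ∑ i ∈ Finset.range (k + 2), d i * 4 ^ i
          = d (k + 1) * (4 ^ (k + 2) + 1) + ∑ i ∈ Finset.range (k + 2), e i * 4 ^ i := by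
        rw [Finset.sum_range_succ' (fun i => d i * 4 ^ i) (k + 1),
            Finset.sum_range_succ (fun i => d (i + 1) * 4 ^ (i + 1)) k,
            Finset.sum_range_succ' (fun i => e i * 4 ^ i) (k + 1),
            Finset.sum_range_succ' (fun i => e (i + 1) * 4 ^ (i + 1)) k]
        simp only [he2, he0, he1]
        have hX : ∑ i ∈ Finset.range k, d (i + 1) * 4 ^ (i + 1 + 1)
            = 4 * ∑ i ∈ Finset.range k, d (i + 1) * 4 ^ (i + 1) := by
          rw [Finset.mul_sum]
          apply Finset.sum_congr rfl
          intro i _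
          ring
        rw [hX]
        have hP : (4:ℕ) ^ (k + 2) = 4 ^ (k + 1) * 4 := pow_succ 4 (k + 1)
        set X := ∑ i ∈ Finset.range k, d (i + 1) * 4 ^ (i + 1) with hXdef
        set P := (4:ℕ) ^ (k + 1) with hPdef
        rcases hd0 with h0 | h0 <;> rcases hdk with hk | hk <;>
          rw [h0, hk, hP] <;> ring_nf <;> omega
      rw [hEq, Nat.mul_add_mod', Nat.mod_eq_of_lt hlt]
end

section
/- The sets T = ⋃_{i=0}^{4^{h-1}} C_i^{(4)} and T^c = { Σ_{i=0}^{h-1} a_i 4^i : a_0 ∈ {2,3}, a_i ∈ {1,2} for 1 ≤ i ≤ h−1 } are disjoint and their union is Z_n = {0,1,…,n−1}, where n = 4^h+1. -/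
def IsTc (h a : ℕ) : Prop := ∃ d : ℕ → ℕ, (d 0 = 2 ∨ d 0 = 3) ∧
  (∀ i, 1 ≤ i → i ≤ h - 1 → d i = 1 ∨ d i = 2) ∧
  a = ∑ i ∈ Finset.range h, d i * 4 ^ i

lemma geom4 (t : ℕ) : 3 * (∑ i ∈ Finset.range t, 4^i) + 1 = 4^t := by
  induction t with
  | zero => simp
  | succ t ih =>
    rw [Finset.sum_range_succ, pow_succ]
    generalize hG : (∑ i ∈ Finset.range t, (4:ℕ)^i) = G at *
    generalize (4:ℕ)^t = P at *
    omega

lemma isTc_bounds {h a : ℕ} (hh : 1 ≤ h) (ha : IsTc h a) :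
    4^(h-1) + 1 ≤ a ∧ a ≤ 3 * 4^(h-1) := by
  obtain ⟨d, h0, hi, rfl⟩ := ha
  obtain ⟨t, rfl⟩ : ∃ t, h = t + 1 := ⟨h - 1, by omega⟩
  simp only [Nat.add_sub_cancel] at hi ⊢
  rw [Finset.sum_range_succ']
  have hG := geom4 t
  have h1 : ∑ i ∈ Finset.range t, d (i+1) * 4^(i+1) ≤ ∑ i ∈ Finset.range t, 8 * 4^i := by
    apply Finset.sum_le_sum
    intro i hi'
    simp only [Finset.mem_range] at hi'
    have hd := hi (i+1) (by omega) (by omega)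
    have : d (i+1) * 4^(i+1) = d (i+1) * 4 * 4^i := by ring
    rw [this]
    apply Nat.mul_le_mul_right
    omega
  have h2 : ∑ i ∈ Finset.range t, 4 * 4^i ≤ ∑ i ∈ Finset.range t, d (i+1) * 4^(i+1) := by
    apply Finset.sum_le_sum
    intro i hi'
    simp only [Finset.mem_range] at hi'
    have hd := hi (i+1) (by omega) (by omega)
    have : d (i+1) * 4^(i+1) = d (i+1) * 4 * 4^i := by ring
    rw [this]
    apply Nat.mul_le_mul_right
    omega
  rw [← Finset.mul_sum] at h1 h2
  simp only [pow_zero, mul_one]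
  generalize hS : (∑ k ∈ Finset.range t, d (k+1) * 4^(k+1)) = S at *
  generalize hGG : (∑ i ∈ Finset.range t, (4:ℕ)^i) = G at *
  generalize hP : (4:ℕ)^t = P at *
  omega

lemma isTc_closure {h a : ℕ} (hh : 1 ≤ h) (ha : IsTc h a) :
    IsTc h ((4 * a) % (4^h + 1)) := by
  rcases Nat.lt_or_ge h 2 with h1 | h2
  · -- h = 1
    obtain ⟨t, rfl⟩ : ∃ t, h = t + 1 := ⟨h - 1, by omega⟩
    have ht : t = 0 := by omega
    subst ht
    obtain ⟨d, h0, hi, rfl⟩ := ha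
    have hs : (∑ i ∈ Finset.range 1, d i * 4 ^ i) = d 0 := by simp
    rw [hs]
    rcases h0 with h0 | h0 <;> rw [h0] <;> norm_num
    · exact ⟨fun _ => 3, Or.inr rfl, by omega, by simp⟩
    · exact ⟨fun _ => 2, Or.inl rfl, by omega, by simp⟩
  · -- h = t + 2
    obtain ⟨t, rfl⟩ : ∃ t, h = t + 2 := ⟨h - 2, by omega⟩
    obtain ⟨d, h0, hi, rfl⟩ := ha
    set e : ℕ → ℕ := fun i => if i = 0 then 4 - d (t+1) else if i = 1 then d 0 - 1 else d (i-1) with he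
    have hdt := hi (t+1) (by omega) (by omega)
    have hbTc : IsTc (t+2) (∑ i ∈ Finset.range (t+2), e i * 4^i) := by
      refine ⟨e, ?_, ?_, rfl⟩
      · rw [show e 0 = 4 - d (t+1) from rfl]; omega
      · intro i hi1 hi2
        simp only [he]
        rcases Nat.lt_or_ge i 2 with hl | hl
        · have : i = 1 := by omega
          subst this; simp; omega
        · have hne0 : i ≠ 0 := by omega
          have hne1 : i ≠ 1 := by omega
          simp only [if_neg hne0, if_neg hne1]
          exact hi (i-1) (by omega) (by omega)
    have hE : 4 * (∑ i ∈ Finset.range (t+2), d i * 4^i)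
        = d (t+1) * (4^(t+2) + 1) + ∑ i ∈ Finset.range (t+2), e i * 4^i := by
      rw [Finset.sum_range_succ' (fun i => d i * 4^i) (t+1)]
      rw [Finset.sum_range_succ' (fun i => e i * 4^i) (t+1)]
      rw [Finset.sum_range_succ' (fun i => e (i+1) * 4^(i+1)) t]
      rw [Finset.sum_range_succ (fun i => d (i+1) * 4^(i+1)) t]
      have he0 : e 0 = 4 - d (t+1) := by simp [he]
      have he1 : e 1 = d 0 - 1 := by simp [he]
      have he2 : ∀ i, e (i+2) = d (i+1) := fun i => by simp [he]
      simp only [he0, he1, he2, pow_zero, mul_one]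
      have hSS : (∑ x ∈ Finset.range t, d (x+1) * 4^(x+1+1))
          = 4 * ∑ x ∈ Finset.range t, d (x+1) * 4^(x+1) := by
        rw [Finset.mul_sum]
        exact Finset.sum_congr rfl (fun i _ => by ring)
      rw [hSS, show (4:ℕ)^(t+2) = 4 * 4^(t+1) by ring]
      generalize (∑ x ∈ Finset.range t, d (x+1) * 4^(x+1)) = S
      generalize (4:ℕ)^(t+1) = P
      rcases hdt with hdt | hdt <;> rcases h0 with h0 | h0 <;> rw [hdt, h0] <;> omega
    have hblt : (∑ i ∈ Finset.range (t+2), e i * 4^i) < 4^(t+2) + 1 := by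
      have hb2 := (isTc_bounds (by omega) hbTc).2
      have h4 : 3 * 4^(t+2-1) < 4^(t+2)+1 := by
        rw [show t+2-1 = t+1 from rfl, show (4:ℕ)^(t+2) = 4*4^(t+1) by ring]
        have : 0 < (4:ℕ)^(t+1) := by positivity
        omega
      omega
    rw [hE, mul_comm (d (t+1)) _, Nat.mul_add_mod, Nat.mod_eq_of_lt hblt]
    exact hbTc

lemma pow3lt (m : ℕ) : 3 * 4^m < 4^(m+1) + 1 := by
  have h4 : (0:ℕ) < 4^m := by positivity
  rw [pow_succ]
  omega

lemma isTc_lt {h a : ℕ} (hh : 1 ≤ h) (ha : IsTc h a) : a < 4^h + 1 := by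
  obtain ⟨t, rfl⟩ : ∃ t, h = t + 1 := ⟨h - 1, by omega⟩
  have h2 := (isTc_bounds hh ha).2
  have h3 := pow3lt t
  simp only [Nat.add_sub_cancel] at h2
  omega

lemma isTc_mul_pow {h a : ℕ} (hh : 1 ≤ h) (ha : IsTc h a) (j : ℕ) :
    IsTc h ((a * 4^j) % (4^h + 1)) := by
  have hn4 : 4 ≤ 4^h := by
    calc (4:ℕ) = 4^1 := (pow_one 4).symm
    _ ≤ 4^h := Nat.pow_le_pow_right (by norm_num) hh
  induction j with
  | zero =>
    rw [pow_zero, mul_one, Nat.mod_eq_of_lt (isTc_lt hh ha)]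
    exact ha
  | succ j ih =>
    have e1 : a * 4^(j+1) % (4^h+1) = (4 * (a * 4^j % (4^h+1))) % (4^h+1) := by
      rw [show a * 4^(j+1) = 4 * (a * 4^j) by ring]
      conv_lhs => rw [Nat.mul_mod, Nat.mod_eq_of_lt (show 4 < 4^h+1 by omega)]
    rw [e1]
    exact isTc_closure hh ih

lemma pow_two_h_modeq (h : ℕ) : (4:ℕ)^(2*h) ≡ 1 [MOD 4^h + 1] := by
  have h4 : 1 ≤ (4:ℕ)^h := Nat.one_le_pow _ _ (by norm_num)
  have key : (4:ℕ)^(2*h) = (4^h+1) * (4^h-1) + 1 := by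
    rw [two_mul, pow_add]
    obtain ⟨b, hb⟩ := Nat.exists_eq_add_of_le h4
    rw [hb]
    rw [show 1 + b - 1 = b from by omega]
    ring
  unfold Nat.ModEq
  rw [key, Nat.mul_add_mod]

lemma orbit_back {h x y : ℕ} (j : ℕ) (hh : 1 ≤ h) (hx : x < 4^h + 1)
    (hy : y ≡ x * 4^j [MOD 4^h + 1]) :
    x = (y * 4^(2*h*(j+1) - j)) % (4^h + 1) := by
  have hj : j + (2*h*(j+1) - j) = 2*h*(j+1) := by
    have : j + 1 ≤ 2*h*(j+1) := Nat.le_mul_of_pos_left (j+1) (by omega)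
    omega
  have h1 : y * 4^(2*h*(j+1)-j) ≡ (x * 4^j) * 4^(2*h*(j+1)-j) [MOD 4^h+1] :=
    hy.mul_right _
  have h2 : (x * 4^j) * 4^(2*h*(j+1)-j) = x * 4^(2*h*(j+1)) := by
    rw [mul_assoc, ← pow_add, hj]
  have h3 : x * 4^(2*h*(j+1)) ≡ x * 1 [MOD 4^h+1] := by
    rw [show 2*h*(j+1) = (2*h)*(j+1) from rfl, pow_mul]
    exact (((pow_two_h_modeq h).pow (j+1)).trans (by rw [one_pow])).mul_left x
  have h4 : y * 4^(2*h*(j+1)-j) ≡ x [MOD 4^h+1] := by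
    calc y * 4^(2*h*(j+1)-j) ≡ x * 4^(2*h*(j+1)) [MOD 4^h+1] := h2 ▸ h1
    _ ≡ x * 1 [MOD 4^h+1] := h3
    _ = x := mul_one x
  rw [← Nat.mod_eq_of_lt hx]
  exact h4.symm

lemma main (m : ℕ) :
    Disjoint {x : ℕ | ∃ i ≤ 4^m, ∃ j : ℕ, x = (i * 4^j) % (4^(m+1)+1)} {a : ℕ | IsTc (m+1) a} ∧
    ({x : ℕ | ∃ i ≤ 4^m, ∃ j : ℕ, x = (i * 4^j) % (4^(m+1)+1)} ∪ {a : ℕ | IsTc (m+1) a})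
      = Set.Iio (4^(m+1)+1) := by
  have hh : 1 ≤ m+1 := by omega
  have h4m : (1:ℕ) ≤ 4^m := Nat.one_le_pow _ _ (by norm_num)
  have hpow : (4:ℕ)^(m+1) = 4*4^m := by rw [pow_succ]; ring
  have hn5 : 5 ≤ 4^(m+1)+1 := by omega
  constructor
  · rw [Set.disjoint_left]
    rintro a ⟨i, hile, j, rfl⟩ haTc
    have haTc' : IsTc (m+1) ((i * 4^j) % (4^(m+1)+1)) := haTc
    have hmod : (i * 4^j % (4^(m+1)+1)) ≡ i * 4^j [MOD 4^(m+1)+1] := Nat.mod_modEq _ _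
    have hio : i = ((i * 4^j % (4^(m+1)+1)) * 4^(2*(m+1)*(j+1)-j)) % (4^(m+1)+1) :=
      orbit_back j hh (by omega) hmod
    have hiTc : IsTc (m+1) i := by rw [hio]; exact isTc_mul_pow hh haTc' _
    have hlb := (isTc_bounds hh hiTc).1
    simp only [Nat.add_sub_cancel] at hlb
    omega
  · ext x
    simp only [Set.mem_union, Set.mem_setOf_eq, Set.mem_Iio]
    constructor
    · rintro (⟨i, hi, j, rfl⟩ | hx)
      · exact Nat.mod_lt _ (by omega)
      · have := isTc_lt hh hx; omega
    · intro hxn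
      by_cases hT : ∃ i ≤ 4^m, ∃ j : ℕ, x = (i * 4^j) % (4^(m+1)+1)
      · exact Or.inl hT
      · right
        push_neg at hT
        have hx0 : x ≠ 0 := fun h0 => hT 0 (Nat.zero_le _) 0 (by simp [h0])
        set r : ℕ → ℕ := fun j => x * 4^j % (4^(m+1)+1) with hrdef
        have hrlt : ∀ j, r j < 4^(m+1)+1 := fun j => Nat.mod_lt _ (by omega)
        have hrmeq : ∀ j, r j ≡ x * 4^j [MOD 4^(m+1)+1] := fun j => Nat.mod_modEq _ _
        have hI : ∀ j, 4^m + 1 ≤ r j ∧ r j ≤ 3*4^m := by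
          intro j
          constructor
          · by_contra hc
            push_neg at hc
            exact hT (r j) (by omega) _ (orbit_back j hh hxn (hrmeq j))
          · by_contra hc
            push_neg at hc
            have hrpos : 1 ≤ r j := by omega
            have key : (r j) * 4^(m+1) = (r j - 1) * (4^(m+1)+1) + (4^(m+1)+1 - r j) := by
              zify [hrpos, (hrlt j).le]
              ring
            have hmeq2 : (4^(m+1)+1 - r j) ≡ x * 4^(j+(m+1)) [MOD 4^(m+1)+1] := by
              have e1 : (r j) * 4^(m+1) ≡ (4^(m+1)+1 - r j) [MOD 4^(m+1)+1] := by
                unfold Nat.ModEq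
                rw [key, add_comm, Nat.add_mul_mod_self_right]
              have e2 : (r j) * 4^(m+1) ≡ (x*4^j) * 4^(m+1) [MOD 4^(m+1)+1] :=
                (hrmeq j).mul_right _
              calc (4^(m+1)+1 - r j) ≡ (r j)*4^(m+1) [MOD 4^(m+1)+1] := e1.symm
              _ ≡ (x*4^j)*4^(m+1) [MOD 4^(m+1)+1] := e2
              _ = x * 4^(j+(m+1)) := by rw [mul_assoc, ← pow_add]
            have hnr : 4^(m+1)+1 - r j ≤ 4^m := by omega
            exact hT (4^(m+1)+1 - r j) hnr _ (orbit_back (j+(m+1)) hh hxn hmeq2)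
        set k : ℕ → ℕ := fun j => 4 * r j / (4^(m+1)+1) with hkdef
        have hk12 : ∀ j, 1 ≤ k j ∧ k j < 3 := by
          intro j
          obtain ⟨h1, h2⟩ := hI j
          constructor
          · rw [hkdef]
            exact (Nat.one_le_div_iff (by omega)).mpr (by omega)
          · rw [hkdef]
            apply Nat.div_lt_of_lt_mul
            omega
        have hrec : ∀ j, 4 * r j = (4^(m+1)+1) * k j + r (j+1) := by
          intro j
          have hdm := Nat.div_add_mod (4 * r j) (4^(m+1)+1)
          have hmod : (4 * r j) % (4^(m+1)+1) = r (j+1) := by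
            show (4 * (x * 4^j % (4^(m+1)+1))) % (4^(m+1)+1) = x * 4^(j+1) % (4^(m+1)+1)
            conv_rhs => rw [show x * 4^(j+1) = 4 * (x*4^j) by ring,
              Nat.mul_mod 4 (x*4^j) (4^(m+1)+1),
              Nat.mod_eq_of_lt (show (4:ℕ) < 4^(m+1)+1 by omega)]
          rw [hmod] at hdm
          exact hdm.symm
        have hkey : ∀ M, 4^M * x
            = (4^(m+1)+1) * (∑ j ∈ Finset.range M, k j * 4^(M-1-j)) + r M := by
          intro M
          induction M with
          | zero =>
            simp only [Finset.range_zero, Finset.sum_empty, mul_zero, zero_add, pow_zero, one_mul]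
            show x = x * 4^0 % (4^(m+1)+1)
            rw [pow_zero, mul_one, Nat.mod_eq_of_lt hxn]
          | succ M ih =>
            have e1 : (∑ j ∈ Finset.range (M+1), k j * 4^(M+1-1-j))
                = 4 * (∑ j ∈ Finset.range M, k j * 4^(M-1-j)) + k M := by
              rw [Finset.sum_range_succ]
              congr 1
              · rw [Finset.mul_sum]
                apply Finset.sum_congr rfl
                intro i hi
                simp only [Finset.mem_range] at hi
                rw [show M+1-1-i = (M-1-i)+1 by omega, pow_succ]
                ring
              · rw [show M+1-1-M = 0 by omega, pow_zero, mul_one]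
            calc 4^(M+1) * x = 4 * (4^M * x) := by ring
              _ = 4 * ((4^(m+1)+1) * (∑ j ∈ Finset.range M, k j * 4^(M-1-j)) + r M) := by
                  rw [ih]
              _ = (4^(m+1)+1) * (4 * ∑ j ∈ Finset.range M, k j * 4^(M-1-j)) + 4 * r M := by
                  ring
              _ = (4^(m+1)+1) * (4 * ∑ j ∈ Finset.range M, k j * 4^(M-1-j))
                    + ((4^(m+1)+1) * k M + r (M+1)) := by rw [hrec M]
              _ = (4^(m+1)+1) * (4 * (∑ j ∈ Finset.range M, k j * 4^(M-1-j)) + k M)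
                    + r (M+1) := by ring
              _ = (4^(m+1)+1) * (∑ j ∈ Finset.range (M+1), k j * 4^(M+1-1-j)) + r (M+1) := by
                  rw [e1]
        have hrh : r (m+1) = (4^(m+1)+1) - x := by
          show x * 4^(m+1) % (4^(m+1)+1) = 4^(m+1)+1 - x
          have hx1 : 1 ≤ x := by omega
          have key : x * 4^(m+1) = (x-1) * (4^(m+1)+1) + (4^(m+1)+1 - x) := by
            zify [hx1, show x ≤ 4^(m+1)+1 by omega]
            ring
          rw [key, add_comm, Nat.add_mul_mod_self_right, Nat.mod_eq_of_lt (by omega)]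
        have hkeyh := hkey (m+1)
        rw [hrh] at hkeyh
        set Sm := ∑ j ∈ Finset.range (m+1), k j * 4^(m+1-1-j) with hSm
        have hxval : x = Sm + 1 := by
          have h3 : 4^(m+1)*x + x = (4^(m+1)+1)*Sm + (4^(m+1)+1) := by
            rw [hkeyh, add_assoc, Nat.sub_add_cancel (show x ≤ 4^(m+1)+1 by omega)]
          have h2 : (4^(m+1)+1) * x = (4^(m+1)+1) * (Sm + 1) := by
            calc (4^(m+1)+1)*x = 4^(m+1)*x + x := by ring
              _ = (4^(m+1)+1)*Sm + (4^(m+1)+1) := h3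
              _ = (4^(m+1)+1)*(Sm+1) := by ring
          exact Nat.eq_of_mul_eq_mul_left (by omega) h2
        refine ⟨fun i => if i = 0 then k m + 1 else k (m - i), ?_, ?_, ?_⟩
        · show (if (0:ℕ) = 0 then k m + 1 else k (m - 0)) = 2 ∨
            (if (0:ℕ) = 0 then k m + 1 else k (m - 0)) = 3
          rw [if_pos rfl]
          obtain ⟨a1, a2⟩ := hk12 m
          omega
        · intro i h1 h2
          show (if i = 0 then k m + 1 else k (m - i)) = 1 ∨
            (if i = 0 then k m + 1 else k (m - i)) = 2
          rw [if_neg (by omega)]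
          obtain ⟨a1, a2⟩ := hk12 (m - i)
          omega
        · rw [hxval, hSm]
          rw [Finset.sum_range_succ' (fun i => (if i = 0 then k m + 1 else k (m-i)) * 4^i) m]
          rw [Finset.sum_range_succ (fun j => k j * 4^(m+1-1-j)) m]
          simp only [if_pos rfl, Nat.succ_ne_zero, if_neg, if_true, if_false, pow_zero, mul_one]
          have hrefl := Finset.sum_range_reflect (fun j => k j * 4^(m-j)) m
          have e2 : (∑ i ∈ Finset.range m, k (m-(i+1)) * 4^(i+1))
              = ∑ j ∈ Finset.range m, k j * 4^(m+1-1-j) := by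
            calc (∑ i ∈ Finset.range m, k (m-(i+1)) * 4^(i+1))
                = ∑ i ∈ Finset.range m, k (m-1-i) * 4^(m-(m-1-i)) := by
                  apply Finset.sum_congr rfl
                  intro i hi
                  simp only [Finset.mem_range] at hi
                  rw [show m-(i+1) = m-1-i by omega, show m-(m-1-i) = i+1 by omega]
              _ = ∑ j ∈ Finset.range m, k j * 4^(m-j) := hrefl
              _ = ∑ j ∈ Finset.range m, k j * 4^(m+1-1-j) := by
                  apply Finset.sum_congr rfl
                  intro j hj
                  rw [show m+1-1-j = m-j by omega]
          rw [← e2]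
          rw [show m+1-1-m = 0 by omega, pow_zero, mul_one]
          ring

theorem stmt_6 (h : ℕ) (hh : 1 ≤ h) :
    let n := 4 ^ h + 1
    let T : Set ℕ := {x | ∃ i ≤ 4 ^ (h - 1), ∃ j : ℕ, x = (i * 4 ^ j) % n}
    let Tc : Set ℕ := {a | ∃ d : ℕ → ℕ, (d 0 = 2 ∨ d 0 = 3) ∧
      (∀ i, 1 ≤ i → i ≤ h - 1 → d i = 1 ∨ d i = 2) ∧
      a = ∑ i ∈ Finset.range h, d i * 4 ^ i}
    Disjoint T Tc ∧ T ∪ Tc = Set.Iio n := by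
  obtain ⟨m, rfl⟩ : ∃ m, h = m + 1 := ⟨h - 1, by omega⟩
  intro n T Tc
  exact main m
end

section
/- Let a = Σ_{i=0}^{h-1} a_i 4^i with 0 ≤ a_i ≤ 3, a_{h-1} ∈ {1,2}, and a_0 = 1, and suppose (4^h+2)/3 ≤ a ≤ (2·4^h+1)/3. Then a·4^{h-1} mod (4^h+1) = 4^{h-1} − (a−1)/4, which is at most (2·4^h+1)/12 and hence less than (4^h−1)/3. -/
theorem stmt_7 (h : ℕ) (hh : 3 ≤ h) (d : ℕ → ℕ)
    (hd : ∀ i, i ≤ h - 1 → d i ≤ 3) (h0 : d 0 = 1)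
    (hl : d (h - 1) = 1 ∨ d (h - 1) = 2)
    (a : ℕ) (ha : a = ∑ i ∈ Finset.range h, d i * 4 ^ i)
    (hmin : (4 ^ h + 2) / 3 ≤ a) (hmax : a ≤ (2 * 4 ^ h + 1) / 3) :
    (a * 4 ^ (h - 1)) % (4 ^ h + 1) = 4 ^ (h - 1) - (a - 1) / 4 ∧
      12 * (4 ^ (h - 1) - (a - 1) / 4) ≤ 2 * 4 ^ h + 1 ∧
      (a * 4 ^ (h - 1)) % (4 ^ h + 1) < (4 ^ h - 1) / 3 := by
  obtain ⟨h', rfl⟩ : ∃ h', h = h' + 1 := ⟨h - 1, by omega⟩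
  -- a = 4 * s + 1 for some s
  have hsum : a = 4 * (∑ i ∈ Finset.range h', d (i + 1) * 4 ^ i) + 1 := by
    rw [ha, Finset.sum_range_succ', h0, Finset.mul_sum]
    simp only [pow_succ, pow_zero, one_mul]
    congr 1
    exact Finset.sum_congr rfl fun i _ => by ring
  set b : ℕ := (a - 1) / 4 with hbdef
  have hab : a = 4 * b + 1 := by omega
  set P : ℕ := 4 ^ (h' + 1 - 1) with hPdef
  have hP4 : (4:ℕ) ^ (h' + 1) = 4 * P := by
    rw [hPdef, Nat.add_sub_cancel, pow_succ]; ring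
  have hP16 : 16 ≤ P := by
    rw [hPdef]
    calc (16:ℕ) = 4 ^ 2 := by norm_num
    _ ≤ 4 ^ (h' + 1 - 1) := Nat.pow_le_pow_right (by norm_num) (by omega)
  have hmod3 : (4:ℕ) ^ (h' + 1) % 3 = 1 := by
    rw [Nat.pow_mod]; norm_num
  have hbP : b ≤ P := by omega
  obtain ⟨c, hc⟩ := Nat.exists_eq_add_of_le hbP
  have key : (a * 4 ^ (h' + 1 - 1)) % (4 ^ (h' + 1) + 1) = P - b := by
    have hPb : P - b = c := by omega
    have hexp : a * 4 ^ (h' + 1 - 1) = (4 ^ (h' + 1) + 1) * b + c := by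
      rw [hab, hP4, ← hPdef, hc]; ring
    rw [hexp, Nat.mul_add_mod, Nat.mod_eq_of_lt (by omega), hPb]
  rw [key]
  omega
end

section
/- Every integer a with (4^h+2)/3 ≤ a ≤ (2·4^h+1)/3 belongs to either T or T^c, where T = ⋃_{i=0}^{4^{h-1}} C_i^{(4)} and T^c is the set of integers with base-4 digits a_0 ∈ {2,3} and a_i ∈ {1,2} for 1 ≤ i ≤ h−1. -/
/-- digit expansion of `a % b^m` -/
lemma aux_sum_digits (b : ℕ) : ∀ (m a : ℕ),
    a % b ^ m = ∑ i ∈ Finset.range m, a / b ^ i % b * b ^ i := by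
  intro m
  induction m with
  | zero => intro a; simp [Nat.mod_one]
  | succ m ih =>
    intro a
    rw [Finset.sum_range_succ, ← ih a, pow_succ, Nat.mod_mul]
    ring

/-- the negacyclic inverse shift: if the `(k+1)`-low part of `b` is at least
`3*4^k+1`, then `b` is a multiple of `4^(k+1)` mod `4^h+1` with small cofactor. -/
lemma aux_shift (h k b : ℕ) (hk : k + 1 ≤ h) (hb : b < 4 ^ h + 1)
    (hx : 3 * 4 ^ k + 1 ≤ b % 4 ^ (k + 1)) :
    ∃ i ≤ 4 ^ (h - 1), (i * 4 ^ (k + 1)) % (4 ^ h + 1) = b := by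
  obtain ⟨x, y, hxy, hxlt, hxge⟩ :
      ∃ x y, 4 ^ (k + 1) * y + x = b ∧ x < 4 ^ (k + 1) ∧ 3 * 4 ^ k + 1 ≤ x :=
    ⟨b % 4 ^ (k + 1), b / 4 ^ (k + 1), Nat.div_add_mod b _,
      Nat.mod_lt _ (by positivity), hx⟩
  have hPQ : 4 ^ (k + 1) * 4 ^ (h - k - 1) = 4 ^ h := by
    rw [← pow_add]; congr 1; omega
  have hkQ : 4 ^ k * 4 ^ (h - k - 1) = 4 ^ (h - 1) := by
    rw [← pow_add]; congr 1; omega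
  have hN4 : 4 ^ h = 4 * 4 ^ (h - 1) := by
    conv_lhs => rw [show h = (h - 1) + 1 from by omega]
    rw [pow_succ]; ring
  have hQpos : 0 < 4 ^ (h - k - 1) := by positivity
  -- y < 4^(h-k-1)
  have hyQ : y < 4 ^ (h - k - 1) := by
    by_contra hcon
    push_neg at hcon
    have h1 : 4 ^ (k + 1) * 4 ^ (h - k - 1) ≤ 4 ^ (k + 1) * y :=
      Nat.mul_le_mul_left _ hcon
    rw [hPQ] at h1
    omega
  -- x * Q ≥ 3 * 4^(h-1) + Q
  have hxQ : 3 * 4 ^ (h - 1) + 4 ^ (h - k - 1) ≤ x * 4 ^ (h - k - 1) := by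
    calc 3 * 4 ^ (h - 1) + 4 ^ (h - k - 1)
        = (3 * 4 ^ k + 1) * 4 ^ (h - k - 1) := by
          rw [add_mul, one_mul, mul_assoc, hkQ]
    _ ≤ x * 4 ^ (h - k - 1) := Nat.mul_le_mul_right _ hxge
  have hxQle : x * 4 ^ (h - k - 1) ≤ 4 ^ h := by
    calc x * 4 ^ (h - k - 1) ≤ 4 ^ (k + 1) * 4 ^ (h - k - 1) :=
      Nat.mul_le_mul_right _ (by omega)
    _ = 4 ^ h := hPQ
  refine ⟨4 ^ h + 1 + y - x * 4 ^ (h - k - 1), by omega, ?_⟩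
  obtain ⟨i, hidef⟩ : ∃ i, i = 4 ^ h + 1 + y - x * 4 ^ (h - k - 1) := ⟨_, rfl⟩
  rw [← hidef]
  have hi : i + x * 4 ^ (h - k - 1) = 4 ^ h + 1 + y := by omega
  have e1 : i * 4 ^ (k + 1) + x * (4 ^ (k + 1) * 4 ^ (h - k - 1))
      = (4 ^ h + 1) * 4 ^ (k + 1) + y * 4 ^ (k + 1) := by
    calc i * 4 ^ (k + 1) + x * (4 ^ (k + 1) * 4 ^ (h - k - 1))
        = (i + x * 4 ^ (h - k - 1)) * 4 ^ (k + 1) := by ring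
    _ = (4 ^ h + 1 + y) * 4 ^ (k + 1) := by rw [hi]
    _ = (4 ^ h + 1) * 4 ^ (k + 1) + y * 4 ^ (k + 1) := by ring
  rw [hPQ] at e1
  have e2 : x * (4 ^ h + 1) = x * 4 ^ h + x := by ring
  have e3 : y * 4 ^ (k + 1) = 4 ^ (k + 1) * y := mul_comm _ _
  have key : i * 4 ^ (k + 1) + x * (4 ^ h + 1)
      = (4 ^ h + 1) * 4 ^ (k + 1) + b := by omega
  have : (i * 4 ^ (k + 1)) % (4 ^ h + 1)
      = (i * 4 ^ (k + 1) + x * (4 ^ h + 1)) % (4 ^ h + 1) := by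
    rw [Nat.add_mul_mod_self_right]
  rw [this, key, Nat.mul_add_mod, Nat.mod_eq_of_lt hb]

/-- if `m ≡ -a` mod `4^h+1` then `m * 4^h ≡ a`. -/
lemma aux_neg (h a m : ℕ) (ha1 : 1 ≤ a) (ha2 : a < 4 ^ h + 1)
    (hm : m % (4 ^ h + 1) = 4 ^ h + 1 - a) :
    (m * 4 ^ h) % (4 ^ h + 1) = a := by
  obtain ⟨q, hqdef⟩ : ∃ q, q = m / (4 ^ h + 1) := ⟨_, rfl⟩
  have hdm : (4 ^ h + 1) * q + (4 ^ h + 1 - a) = m := by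
    conv_rhs => rw [← Nat.div_add_mod m (4 ^ h + 1)]
    rw [hm, hqdef]
  have hq : q ≤ (4 ^ h + 1) * q := Nat.le_mul_of_pos_left q (by positivity)
  obtain ⟨t, ht⟩ : ∃ t, m = q + 1 + t := ⟨m - q - 1, by omega⟩
  have e3 : m * 4 ^ h + m = q * 4 ^ h + q + 4 ^ h + 1 + t * 4 ^ h + t := by
    rw [ht]; ring
  have e4 : (4 ^ h + 1) * q = q * 4 ^ h + q := by ring
  have e5 : (4 ^ h + 1) * t = t * 4 ^ h + t := by ring
  have key : m * 4 ^ h = (4 ^ h + 1) * t + a := by omega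
  rw [key, Nat.mul_add_mod, Nat.mod_eq_of_lt ha2]

theorem stmt_9 (h : ℕ) (hh : 1 ≤ h) (a : ℕ)
    (hmin : (4 ^ h + 2) / 3 ≤ a) (hmax : a ≤ (2 * 4 ^ h + 1) / 3) :
    (∃ i ≤ 4 ^ (h - 1), ∃ j : ℕ, a = (i * 4 ^ j) % (4 ^ h + 1)) ∨
      (∃ d : ℕ → ℕ, (d 0 = 2 ∨ d 0 = 3) ∧
        (∀ i, 1 ≤ i → i ≤ h - 1 → d i = 1 ∨ d i = 2) ∧
        a = ∑ i ∈ Finset.range h, d i * 4 ^ i) := by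
  have h3 : 4 ^ h % 3 = 1 := by simp [Nat.pow_mod]
  have hpow : 4 ^ (h - 1) * 4 = 4 ^ h := by
    rw [← pow_succ]; congr 1; omega
  have h4 : 4 ≤ 4 ^ h := by
    calc (4:ℕ) = 4 ^ 1 := (pow_one 4).symm
    _ ≤ 4 ^ h := Nat.pow_le_pow_right (by norm_num) hh
  -- exact bounds
  have hmin' : 4 ^ h + 2 ≤ 3 * a := by omega
  have hmax' : 3 * a ≤ 2 * 4 ^ h + 1 := by omega
  have hah : a < 4 ^ h := by omega
  have han : a < 4 ^ h + 1 := by omega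
  have ha1 : 1 ≤ a := by omega
  have hdvd4 : (4:ℕ) ∣ 4 ^ h := dvd_pow_self 4 (by omega)
  rcases Nat.lt_or_ge (a % 4) 2 with hlow | hge2
  · -- a % 4 = 0 or 1
    rcases Nat.lt_or_ge (a % 4) 1 with h0 | h1
    · -- a % 4 = 0 : a = (a/4) * 4
      left
      refine ⟨a / 4, by omega, 1, ?_⟩
      rw [pow_one]
      have : a / 4 * 4 = a := by omega
      rw [this, Nat.mod_eq_of_lt han]
    · -- a % 4 = 1 : use 4^h+1-a which is divisible by 4
      left
      have ha4 : a % 4 = 1 := by omega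
      obtain ⟨b, hbdef⟩ : ∃ b, b = 4 ^ h + 1 - a := ⟨_, rfl⟩
      have hb4 : b % 4 = 0 := by
        obtain ⟨c, hc⟩ := hdvd4
        omega
      have hbm : (b / 4 * 4) % (4 ^ h + 1) = 4 ^ h + 1 - a := by
        have hb : b / 4 * 4 = b := by omega
        rw [hb, Nat.mod_eq_of_lt (by omega)]
        exact hbdef
      have hfin := aux_neg h a (b / 4 * 4) ha1 han hbm
      refine ⟨b / 4, by omega, h + 1, ?_⟩
      have he : b / 4 * 4 ^ (h + 1) = b / 4 * 4 * 4 ^ h := by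
        rw [pow_succ]; ring
      rw [he]
      exact hfin.symm
  · -- a % 4 ∈ {2,3}
    by_cases hex3 : ∃ k, 1 ≤ k ∧ k ≤ h - 1 ∧ a / 4 ^ k % 4 = 3
    · -- some middle digit is 3 : direct shift
      left
      obtain ⟨k, hk1, hk2, hk3⟩ := hex3
      have hkh : k + 1 ≤ h := by omega
      have hdvd4k : (4:ℕ) ∣ 4 ^ k := dvd_pow_self 4 (by omega)
      have hmm : a % 4 ^ k % 4 = a % 4 := Nat.mod_mod_of_dvd a hdvd4k
      have hsplit : a % 4 ^ (k + 1) = a % 4 ^ k + 4 ^ k * (a / 4 ^ k % 4) := by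
        rw [pow_succ, Nat.mod_mul]
      have hx : 3 * 4 ^ k + 1 ≤ a % 4 ^ (k + 1) := by
        rw [hsplit, hk3]; omega
      obtain ⟨i, hi, heq⟩ := aux_shift h k a hkh han hx
      exact ⟨i, hi, k + 1, heq.symm⟩
    · by_cases hex0 : ∃ k, 1 ≤ k ∧ k ≤ h - 1 ∧ a / 4 ^ k % 4 = 0
      · -- some middle digit is 0 : shift applied to 4^h+1-a
        left
        obtain ⟨k, hk1, hk2, hk0⟩ := hex0
        have hkh : k + 1 ≤ h := by omega
        have hdvd4k : (4:ℕ) ∣ 4 ^ k := dvd_pow_self 4 (by omega)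
        have hmm : a % 4 ^ k % 4 = a % 4 := Nat.mod_mod_of_dvd a hdvd4k
        have h4k : 2 ≤ 4 ^ k := by
          calc (2:ℕ) ≤ 4 ^ 1 := by norm_num
          _ ≤ 4 ^ k := Nat.pow_le_pow_right (by norm_num) hk1
        have h4kmod : a % 4 ^ k < 4 ^ k := Nat.mod_lt _ (by positivity)
        have hsplit : a % 4 ^ (k + 1) = a % 4 ^ k + 4 ^ k * (a / 4 ^ k % 4) := by
          rw [pow_succ, Nat.mod_mul]
        rw [hk0] at hsplit
        have hxa1 : 2 ≤ a % 4 ^ (k + 1) := by omega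
        have hxa2 : a % 4 ^ (k + 1) < 4 ^ k := by omega
        have hPQ : 4 ^ (k + 1) * 4 ^ (h - k - 1) = 4 ^ h := by
          rw [← pow_add]; congr 1; omega
        have hda : 4 ^ (k + 1) * (a / 4 ^ (k + 1)) + a % 4 ^ (k + 1) = a :=
          Nat.div_add_mod a _
        have hqaQ : a / 4 ^ (k + 1) < 4 ^ (h - k - 1) := by
          exact Nat.div_lt_of_lt_mul (by rw [hPQ]; exact hah)
        obtain ⟨t, ht⟩ : ∃ t, 4 ^ (h - k - 1) = a / 4 ^ (k + 1) + 1 + t :=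
          ⟨4 ^ (h - k - 1) - a / 4 ^ (k + 1) - 1, by omega⟩
        have hPt : 4 ^ (k + 1) * (a / 4 ^ (k + 1) + 1 + t)
            = 4 ^ (k + 1) * (a / 4 ^ (k + 1)) + 4 ^ (k + 1) + 4 ^ (k + 1) * t := by
          ring
        have hPk : (4:ℕ) ^ (k + 1) = 4 * 4 ^ k := by rw [pow_succ]; ring
        have h4h : 4 ^ (k + 1) * (a / 4 ^ (k + 1) + 1 + t) = 4 ^ h := by
          rw [← ht, hPQ]
        obtain ⟨b, hbdef⟩ : ∃ b, b = 4 ^ h + 1 - a := ⟨_, rfl⟩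
        have hbe : b = 4 ^ (k + 1) * t + (4 ^ (k + 1) + 1 - a % 4 ^ (k + 1)) := by
          omega
        have hbmod : b % 4 ^ (k + 1) = 4 ^ (k + 1) + 1 - a % 4 ^ (k + 1) := by
          rw [hbe, Nat.mul_add_mod]
          exact Nat.mod_eq_of_lt (by omega)
        have hxb : 3 * 4 ^ k + 1 ≤ b % 4 ^ (k + 1) := by
          rw [hbmod]; omega
        obtain ⟨i, hi, heq⟩ := aux_shift h k b hkh (by omega) hxb
        rw [hbdef] at heq
        have hfin := aux_neg h a (i * 4 ^ (k + 1)) ha1 han heq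
        refine ⟨i, hi, k + 1 + h, ?_⟩
        have he : i * 4 ^ (k + 1 + h) = i * 4 ^ (k + 1) * 4 ^ h := by
          rw [pow_add]; ring
        rw [he]
        exact hfin.symm
      · -- all middle digits in {1,2} : right disjunct
        right
        push_neg at hex3 hex0
        refine ⟨fun i => a / 4 ^ i % 4, ?_, ?_, ?_⟩
        · show a / 4 ^ 0 % 4 = 2 ∨ a / 4 ^ 0 % 4 = 3
          simp only [pow_zero, Nat.div_one]
          omega
        · intro i hi1 hi2
          show a / 4 ^ i % 4 = 1 ∨ a / 4 ^ i % 4 = 2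
          have hne3 := hex3 i hi1 hi2
          have hne0 := hex0 i hi1 hi2
          have hlt4 : a / 4 ^ i % 4 < 4 := Nat.mod_lt _ (by norm_num)
          omega
        · rw [← aux_sum_digits 4 h a, Nat.mod_eq_of_lt hah]
end

section
/- Let q = 4^h, w = Σ_{i=0}^{2h-1} 2·4^i = 2(q^2−1)/3 and e = 1 + Σ_{i=0}^{h-1} e_i 4^i with each e_i ∈ {1,2}. Then in GF(2)[x], x^{q^2−1−qe}(x+1)^{w+(q−1)e−q^2+1} = Σ x^{Σ_{i=0}^{h-1} v_i 4^i + Σ_{i=0}^{h-1}(3−e_i+v_{i+h})4^{h+i} − 1}, where the sum ranges over all tuples with 0 ≤ v_i ≤ 2−e_i and 0 ≤ v_{i+h} ≤ e_i−1 for 0 ≤ i ≤ h−1. -/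
open Polynomial Finset

lemma geo (n : ℕ) : 3 * (∑ i ∈ Finset.range n, 4 ^ i) + 1 = 4 ^ n := by
  induction n with
  | zero => simp
  | succ n ih => rw [Finset.sum_range_succ, pow_succ]; omega

lemma frob (k : ℕ) : ((X + 1 : (ZMod 2)[X]))^(4^k) = X^(4^k) + 1 := by
  have h4 : (4:ℕ)^k = 2^(2*k) := by rw [pow_mul]; norm_num
  rw [h4, add_pow_char_pow, one_pow]

lemma frob' (k : ℕ) : ((1 + X : (ZMod 2)[X]))^(4^k) = 1 + X^(4^k) := by
  rw [add_comm, frob, add_comm]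

lemma pairfac (a b : ℕ) (c : ℕ) (hc : c = 1 ∨ c = 2) :
    ((X + 1 : (ZMod 2)[X]))^((2 - c) * 4^a + (c - 1) * 4^b) =
      ∑ p ∈ (Finset.univ : Finset (Fin 2 × Fin 2)).filter
          (fun p => (p.1 : ℕ) ≤ 2 - c ∧ (p.2 : ℕ) ≤ c - 1),
        X ^ ((p.1 : ℕ) * 4^a + (p.2 : ℕ) * 4^b) := by
  rcases hc with rfl | rfl
  · rw [show (Finset.univ : Finset (Fin 2 × Fin 2)).filter
        (fun p => (p.1 : ℕ) ≤ 2 - 1 ∧ (p.2 : ℕ) ≤ 1 - 1) = {(0,0),(1,0)} from by decide]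
    rw [Finset.sum_insert (by decide), Finset.sum_singleton]
    simp [frob', add_comm]
  · rw [show (Finset.univ : Finset (Fin 2 × Fin 2)).filter
        (fun p => (p.1 : ℕ) ≤ 2 - 2 ∧ (p.2 : ℕ) ≤ 2 - 1) = {(0,0),(0,1)} from by decide]
    rw [Finset.sum_insert (by decide), Finset.sum_singleton]
    simp [frob', add_comm]

theorem stmt_12 (h : ℕ) (hh : 1 ≤ h) (e : Fin h → ℕ)
    (he : ∀ i, e i = 1 ∨ e i = 2) :
    let q := 4 ^ h
    let w := 2 * (q ^ 2 - 1) / 3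
    let e' := 1 + ∑ i : Fin h, e i * 4 ^ (i : ℕ)
    (Polynomial.X : Polynomial (ZMod 2)) ^ (q ^ 2 - 1 - q * e') *
        (Polynomial.X + 1) ^ (w + (q - 1) * e' - (q ^ 2 - 1)) =
      ∑ v ∈ Finset.univ.filter
          (fun v : Fin h → Fin 2 × Fin 2 =>
            ∀ i, ((v i).1 : ℕ) ≤ 2 - e i ∧ ((v i).2 : ℕ) ≤ e i - 1),
        Polynomial.X ^
          ((∑ i : Fin h, ((v i).1 : ℕ) * 4 ^ (i : ℕ)) +
            (∑ i : Fin h, (3 - e i + ((v i).2 : ℕ)) * 4 ^ (h + (i : ℕ))) - 1) := by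
  intro q w e'
  have he1 : ∀ i, 1 ≤ e i := fun i => by rcases he i with h' | h' <;> omega
  have he2 : ∀ i, e i ≤ 2 := fun i => by rcases he i with h' | h' <;> omega
  set Pf : ℕ := ∑ i : Fin h, 4 ^ (i : ℕ) with hPf
  set S1 : ℕ := ∑ i : Fin h, e i * 4 ^ (i : ℕ) with hS1
  set Shi : ℕ := ∑ i : Fin h, e i * 4 ^ (h + (i : ℕ)) with hShi
  set T1 : ℕ := ∑ i : Fin h, (2 - e i) * 4 ^ (i : ℕ) with hT1
  set T2 : ℕ := ∑ i : Fin h, (e i - 1) * 4 ^ (h + (i : ℕ)) with hT2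
  set U : ℕ := ∑ i : Fin h, (3 - e i) * 4 ^ (h + (i : ℕ)) with hU
  set Hs : ℕ := ∑ i : Fin h, 4 ^ (h + (i : ℕ)) with hHs
  have hPfr : Pf = ∑ i ∈ Finset.range h, 4 ^ i := Fin.sum_univ_eq_sum_range _ h
  have hgeoP : 3 * Pf + 1 = q := by rw [hPfr]; exact geo h
  have hq2 : q ^ 2 = 4 ^ (2 * h) := by rw [mul_comm, pow_mul]
  have hgeoG : 3 * (∑ i ∈ Finset.range (2 * h), 4 ^ i) + 1 = q ^ 2 := by
    rw [hq2]; exact geo (2 * h)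
  have hGsplit : (∑ i ∈ Finset.range (2 * h), 4 ^ i) = Pf + q * Pf := by
    rw [two_mul, Finset.sum_range_add, hPfr, Finset.mul_sum]
    congr 1
    refine Finset.sum_congr rfl fun i _ => ?_
    rw [pow_add]
  have hHeq : Hs = q * Pf := by
    rw [hHs, hPf, Finset.mul_sum]
    refine Finset.sum_congr rfl fun i _ => ?_
    rw [pow_add]
  have hShiq : Shi = q * S1 := by
    rw [hShi, hS1, Finset.mul_sum]
    refine Finset.sum_congr rfl fun i _ => ?_
    rw [pow_add]; ring
  have hf2 : T1 + S1 = 2 * Pf := by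
    rw [hT1, hS1, hPf, ← Finset.sum_add_distrib, Finset.mul_sum]
    refine Finset.sum_congr rfl fun i _ => ?_
    rw [← add_mul]
    congr 1
    have := he1 i; have := he2 i; omega
  have hf3 : T2 + Hs = Shi := by
    rw [hT2, hHs, hShi, ← Finset.sum_add_distrib]
    refine Finset.sum_congr rfl fun i _ => ?_
    nth_rewrite 2 [show (4:ℕ) ^ (h + (i:ℕ)) = 1 * 4 ^ (h + (i:ℕ)) from (one_mul _).symm]
    rw [← add_mul]
    congr 1
    have := he1 i; omega
  have hf4 : U + Shi = 3 * (q * Pf) := by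
    rw [hU, hShi, ← Finset.sum_add_distrib, ← hHeq, hHs, Finset.mul_sum]
    refine Finset.sum_congr rfl fun i _ => ?_
    rw [← add_mul]
    congr 1
    have := he2 i; omega
  have hq4 : 4 ≤ q := by
    calc (4:ℕ) = 4 ^ 1 := (pow_one 4).symm
    _ ≤ 4 ^ h := Nat.pow_le_pow_right (by norm_num) hh
  have he'def : e' = 1 + S1 := rfl
  have hqe' : q * e' = q + Shi := by rw [he'def, mul_add, mul_one, hShiq]
  have hq1e : (q - 1) * e' + e' = q * e' := by
    rw [← add_one_mul]; congr 1; omega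
  have hq2' : q ^ 2 = q * q := sq q
  have hsq : q * q = 3 * (q * Pf) + q := by
    nth_rewrite 1 [← hgeoP]; ring
  have hwq : w = 2 * (Pf + q * Pf) := by
    show 2 * (q ^ 2 - 1) / 3 = _
    rw [hq2', hsq]
    omega
  clear_value q w e' Pf S1 Shi T1 T2 U Hs
  have hPf1 : 1 ≤ Pf := by omega
  have hShile : Shi ≤ 2 * (q * Pf) := by
    rw [hShiq, mul_left_comm]
    exact Nat.mul_le_mul_left q (by omega)
  -- rewrite the two exponents
  have hexp1 : q ^ 2 - 1 - q * e' = U - 1 := by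
    rw [hq2', hsq]; omega
  have hexp2 : w + (q - 1) * e' - (q ^ 2 - 1) = T1 + T2 := by
    rw [hwq, hq2', hsq]; omega
  have hQP1 : 1 ≤ q * Pf := Nat.one_le_iff_ne_zero.mpr (by positivity)
  have hU1 : 1 ≤ U := by omega
  rw [hexp1, hexp2]
  -- polynomial part
  have hTsum : T1 + T2 = ∑ i : Fin h,
      ((2 - e i) * 4 ^ (i : ℕ) + (e i - 1) * 4 ^ (h + (i : ℕ))) := by
    rw [Finset.sum_add_distrib, hT1, hT2]
  rw [hTsum, ← Finset.prod_pow_eq_pow_sum]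
  rw [Finset.prod_congr rfl (fun (i : Fin h) _ => pairfac (↑i) (h + ↑i) (e i) (he i))]
  rw [Finset.prod_univ_sum]
  have hpi : Fintype.piFinset (fun i : Fin h =>
      (Finset.univ : Finset (Fin 2 × Fin 2)).filter
        (fun p => (p.1 : ℕ) ≤ 2 - e i ∧ (p.2 : ℕ) ≤ e i - 1)) =
      Finset.univ.filter (fun v : Fin h → Fin 2 × Fin 2 =>
        ∀ i, ((v i).1 : ℕ) ≤ 2 - e i ∧ ((v i).2 : ℕ) ≤ e i - 1) := by
    ext v
    simp [Fintype.mem_piFinset]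
  rw [hpi, Finset.mul_sum]
  refine Finset.sum_congr rfl fun v hv => ?_
  have hprod : (∏ i : Fin h, (X : (ZMod 2)[X]) ^
        (((v i).1 : ℕ) * 4 ^ (i : ℕ) + ((v i).2 : ℕ) * 4 ^ (h + (i : ℕ)))) =
      X ^ (∑ i : Fin h,
        (((v i).1 : ℕ) * 4 ^ (i : ℕ) + ((v i).2 : ℕ) * 4 ^ (h + (i : ℕ)))) :=
    Finset.prod_pow_eq_pow_sum _ _ _
  rw [hprod, ← pow_add]
  congr 1
  have hsplit : (∑ i : Fin h, (((v i).1 : ℕ) * 4 ^ (i : ℕ) + ((v i).2 : ℕ) * 4 ^ (h + (i : ℕ))))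
      = (∑ i : Fin h, ((v i).1 : ℕ) * 4 ^ (i : ℕ))
        + ∑ i : Fin h, ((v i).2 : ℕ) * 4 ^ (h + (i : ℕ)) := Finset.sum_add_distrib
  have hcomb : (∑ i : Fin h, (3 - e i + ((v i).2 : ℕ)) * 4 ^ (h + (i : ℕ)))
      = U + ∑ i : Fin h, ((v i).2 : ℕ) * 4 ^ (h + (i : ℕ)) := by
    rw [hU, ← Finset.sum_add_distrib]
    refine Finset.sum_congr rfl fun i _ => ?_
    rw [← add_mul]
  rw [hsplit, hcomb]
  omega
end

section
/- Let e_i ∈ {1,2} for 0 ≤ i ≤ h−1 and let ℓ = Σ_{i=0}^{h-1} v_i 4^i + Σ_{i=0}^{h-1}(3−e_i+v_{i+h})4^{h+i} − 1, where 0 ≤ v_i ≤ 2−e_i and 0 ≤ v_{i+h} ≤ e_i−1. Then ℓ mod (4^h+1) belongs to the set E = { 1 + Σ_{i=0}^{h-1} f_i 4^i : f_i ∈ {1,2} }. -/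
lemma geom3 (m : ℕ) : (∑ i ∈ Finset.range m, 3 * 4 ^ i) + 1 = 4 ^ m := by
  induction m with
  | zero => simp
  | succ k ih =>
    rw [Finset.sum_range_succ, pow_succ]
    generalize hx : (4:ℕ) ^ k = x at *
    omega

theorem stmt_13 (h : ℕ) (hh : 1 ≤ h) (e v : ℕ → ℕ)
    (he : ∀ i < h, e i = 1 ∨ e i = 2)
    (hv1 : ∀ i < h, v i ≤ 2 - e i) (hv2 : ∀ i < h, v (i + h) ≤ e i - 1) :
    ∃ f : ℕ → ℕ, (∀ i < h, f i = 1 ∨ f i = 2) ∧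
      ((∑ i ∈ Finset.range h, v i * 4 ^ i) +
          (∑ i ∈ Finset.range h, (3 - e i + v (i + h)) * 4 ^ (h + i)) - 1) % (4 ^ h + 1) =
        1 + ∑ i ∈ Finset.range h, f i * 4 ^ i := by
  refine ⟨fun i => e i + v i - v (i + h), fun i hi => ?_, ?_⟩
  · show e i + v i - v (i + h) = 1 ∨ e i + v i - v (i + h) = 2
    have := hv1 i hi; have := hv2 i hi
    rcases he i hi with h1 | h2 <;> omega
  · set n := 4 ^ h + 1 with hn
    set A := ∑ i ∈ Finset.range h, v i * 4 ^ i with hA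
    set B := ∑ i ∈ Finset.range h, (3 - e i + v (i + h)) * 4 ^ (h + i) with hB
    set F := ∑ i ∈ Finset.range h, (e i + v i - v (i + h)) * 4 ^ i with hF
    set C := ∑ i ∈ Finset.range h, (3 - e i + v (i + h)) * 4 ^ i with hC
    have key : A + B + (∑ i ∈ Finset.range h, 3 * 4 ^ i) = F + n * C := by
      rw [hA, hB, hF, hC, Finset.mul_sum, ← Finset.sum_add_distrib,
        ← Finset.sum_add_distrib, ← Finset.sum_add_distrib]
      refine Finset.sum_congr rfl fun i hi => ?_
      rw [Finset.mem_range] at hi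
      have h1 := hv1 i hi
      have h2 := hv2 i hi
      rcases he i hi with h3 | h3 <;> rw [h3] at h1 h2 ⊢
      · have hw : v (i + h) = 0 := by omega
        rw [hw, pow_add, hn]
        simp only [Nat.sub_zero]
        norm_num
        ring
      · have hv0 : v i = 0 := by omega
        interval_cases hw : v (i + h) <;>
          · rw [hv0, pow_add, hn]; norm_num; try ring
    have hFle : F ≤ ∑ i ∈ Finset.range h, 3 * 4 ^ i := by
      refine Finset.sum_le_sum fun i hi => ?_
      rw [Finset.mem_range] at hi
      have h1 := hv1 i hi
      have h2 := hv2 i hi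
      have : e i + v i - v (i + h) ≤ 3 := by rcases he i hi with h3 | h3 <;> omega
      exact Nat.mul_le_mul_right _ this
    have hC1 : 1 ≤ C := by
      have h0 : (0 : ℕ) ∈ Finset.range h := Finset.mem_range.mpr hh
      have hle := Finset.single_le_sum (f := fun i => (3 - e i + v (i + h)) * 4 ^ i)
        (fun i _ => Nat.zero_le _) h0
      simp only [pow_zero, mul_one] at hle
      rw [← hC] at hle
      have := he 0 hh
      omega
    have hgeom := geom3 h
    obtain ⟨D, hD⟩ : ∃ D, C = D + 1 := ⟨C - 1, by omega⟩
    have hkey2 : A + B - 1 = 1 + F + n * D := by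
      rw [hD, Nat.mul_add, Nat.mul_one] at key
      generalize (4:ℕ) ^ h = P at *
      omega
    have hlt : 1 + F < n := by
      generalize (4:ℕ) ^ h = P at *
      omega
    rw [hkey2, Nat.add_mul_mod_self_left, Nat.mod_eq_of_lt hlt]
end

section
/- Let q = 2^{2h}, w = 2(q^2−1)/3, e ∈ E, and c ∈ GF(q^2)* \ U_{q+1}. Then there exist coefficients (a_ℓ)_{ℓ∈E} in GF(q^2) such that (u+c^q)^e (cu+1)^{w−e} = Σ_{ℓ∈E} a_ℓ u^ℓ for all u ∈ U_{q+1}. -/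
theorem stmt_14 (h : ℕ) (hh : 1 ≤ h) (F : Type) [Field F] [Fintype F]
    (hF : Fintype.card F = (4 ^ h) ^ 2) (c : F) (hc0 : c ≠ 0)
    (hcU : c ^ (4 ^ h + 1) ≠ 1) (e : ℕ)
    (he : ∃ d : ℕ → ℕ, (∀ i < h, d i = 1 ∨ d i = 2) ∧
      e = 1 + ∑ i ∈ Finset.range h, d i * 4 ^ i) :
    let q := 4 ^ h
    let w := 2 * (q ^ 2 - 1) / 3
    let E : Finset ℕ := (Finset.univ : Finset (Fin h → Fin 2)).image
      (fun f => 1 + ∑ i : Fin h, ((f i : ℕ) + 1) * 4 ^ (i : ℕ))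
    ∃ a : ℕ → F, ∀ u : F, u ^ (q + 1) = 1 →
      (u + c ^ q) ^ e * (c * u + 1) ^ (w - e) = ∑ l ∈ E, a l * u ^ l := by
  intro q w E
  obtain ⟨d, hd, hed⟩ := he
  classical
  set s : ℕ := ∑ i ∈ Finset.range h, 4 ^ i with hs
  set A : ℕ := ∑ i ∈ Finset.range h, (d i - 1) * 4 ^ i with hA
  set B : ℕ := ∑ i ∈ Finset.range h, (2 - d i) * 4 ^ i with hB
  have hq : q = 4 ^ h := rfl
  have hw : w = 2 * (q ^ 2 - 1) / 3 := rfl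
  have hE : E = (Finset.univ : Finset (Fin h → Fin 2)).image
      (fun f => 1 + ∑ i : Fin h, ((f i : ℕ) + 1) * 4 ^ (i : ℕ)) := rfl
  -- characteristic 2
  have two0 : (2 : F) = 0 := by
    have h0 : ((Fintype.card F : ℕ) : F) = 0 := FiniteField.cast_card_eq_zero F
    rw [hF] at h0
    push_cast at h0
    rw [← pow_mul] at h0
    have h4 : (4 : F) = 0 := pow_eq_zero_iff (by positivity) |>.mp h0
    have h22 : (2 : F) * 2 = 0 := by rw [show (2:F)*2 = 4 by norm_num, h4]
    rcases mul_eq_zero.mp h22 with h' | h' <;> exact h'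
  have sqF : ∀ x y : F, (x + y) ^ 2 = x ^ 2 + y ^ 2 := by
    intro x y
    have hxy : (x + y) ^ 2 = x ^ 2 + 2 * (x * y) + y ^ 2 := by ring
    rw [hxy, two0]; ring
  have frob : ∀ n : ℕ, ∀ x y : F, (x + y) ^ 4 ^ n = x ^ 4 ^ n + y ^ 4 ^ n := by
    intro n
    induction n with
    | zero => intro x y; simp
    | succ k ih =>
      intro x y
      have h4 : (4 : ℕ) ^ (k + 1) = 4 ^ k * 4 := by ring
      rw [h4, pow_mul, pow_mul, pow_mul, ih x y]
      have h44 : ∀ a b : F, (a + b) ^ 4 = a ^ 4 + b ^ 4 := by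
        intro a b
        have h1 : (a + b) ^ 4 = ((a + b) ^ 2) ^ 2 := by ring
        rw [h1, sqF a b, sqF (a ^ 2) (b ^ 2)]; ring
      exact h44 _ _
  have frobq : ∀ x y : F, (x + y) ^ q = x ^ q + y ^ q := by
    intro x y; rw [hq]; exact frob h x y
  -- numeric facts
  have key4 : ∀ n : ℕ, 4 ^ n = 3 * (∑ i ∈ Finset.range n, 4 ^ i) + 1 := by
    intro n
    induction n with
    | zero => simp
    | succ k ih =>
      rw [Finset.sum_range_succ, pow_succ]
      omega
  have hq3 : q = 3 * s + 1 := by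
    rw [hq, hs]; exact key4 h
  have hs1 : 1 ≤ s := by
    rw [hs]
    calc 1 = 4 ^ 0 := rfl
    _ ≤ ∑ i ∈ Finset.range h, 4 ^ i := by
        apply Finset.single_le_sum (f := fun i => 4 ^ i) (fun i _ => Nat.zero_le _)
        exact Finset.mem_range.mpr hh
  have heA : e = s + 1 + A := by
    have hps : ∀ i ∈ Finset.range h, d i * 4 ^ i = 4 ^ i + (d i - 1) * 4 ^ i := by
      intro i hi
      rcases hd i (Finset.mem_range.mp hi) with h1 | h1 <;> rw [h1] <;> omega
    have haux : ∑ i ∈ Finset.range h, d i * 4 ^ i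
        = (∑ i ∈ Finset.range h, 4 ^ i) + ∑ i ∈ Finset.range h, (d i - 1) * 4 ^ i := by
      rw [← Finset.sum_add_distrib]
      exact Finset.sum_congr rfl hps
    rw [hed, haux, hs, hA]
    omega
  have hAB : A + B = s := by
    rw [hA, hB, hs, ← Finset.sum_add_distrib]
    apply Finset.sum_congr rfl
    intro i hi
    rcases hd i (Finset.mem_range.mp hi) with h1 | h1 <;> rw [h1] <;> omega
  have hAs : A ≤ s := by omega
  have hwval : w = 6 * s ^ 2 + 4 * s := by
    rw [hw, hq3]
    have h1 : (3 * s + 1) ^ 2 - 1 = 3 * (3 * s ^ 2 + 2 * s) := by ring_nf; omega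
    rw [h1, show 2 * (3 * (3 * s ^ 2 + 2 * s)) = 3 * (2 * (3 * s ^ 2 + 2 * s)) by ring,
      Nat.mul_div_cancel_left _ (by norm_num)]
    ring
  have hew : e ≤ w := by nlinarith [hs1, heA, hAs, hwval]
  have h2 : q * e + w + 1 = q ^ 2 + A * q + B + e := by
    rw [hq3, heA, hwval]
    have hABz : (A : ℤ) + B = s := by exact_mod_cast hAB
    zify
    linear_combination (-1 : ℤ) * hABz
  have hq2 : 1 ≤ q ^ 2 := Nat.one_le_pow _ _ (by rw [hq3]; omega)
  have hexp : q * e + (w - e) = q ^ 2 - 1 + (A * q + B) := by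
    have h2' : (q : ℤ) * e + w + 1 = (q : ℤ) ^ 2 + A * q + B + e := by exact_mod_cast h2
    zify [hew, hq2]
    linear_combination h2'
  -- coefficient data
  set α : ℕ → F := fun i => if d i = 1 then c ^ 4 ^ i else 1 with hα
  set β : ℕ → F := fun i => if d i = 1 then 1 else (c ^ q) ^ 4 ^ i with hβ
  set K : Finset ℕ → F :=
    fun T => (∏ i ∈ T, α i) * ∏ i ∈ Finset.range h \ T, β i with hK
  set g : Finset ℕ → ℕ := fun T => s + 1 + ∑ i ∈ T, 4 ^ i with hg
  -- the exponents land in E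
  have hmaps : ∀ T ∈ (Finset.range h).powerset, g T ∈ E := by
    intro T hT
    rw [Finset.mem_powerset] at hT
    rw [hE, Finset.mem_image]
    refine ⟨fun i => if (i : ℕ) ∈ T then 1 else 0, Finset.mem_univ _, ?_⟩
    dsimp only
    simp only [apply_ite (fun x : Fin 2 => (x : ℕ)), Fin.val_one, Fin.val_zero]
    rw [Fin.sum_univ_eq_sum_range (fun n => ((if n ∈ T then 1 else 0) + 1) * 4 ^ n) h]
    have h2 : ∑ i ∈ Finset.range h, ((if i ∈ T then 1 else 0) + 1) * 4 ^ i
        = (∑ i ∈ Finset.range h, (if i ∈ T then 4 ^ i else 0)) + s := by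
      rw [hs, ← Finset.sum_add_distrib]
      apply Finset.sum_congr rfl
      intro i _
      split <;> ring
    have h3 : ∑ i ∈ Finset.range h, (if i ∈ T then 4 ^ i else 0) = ∑ i ∈ T, 4 ^ i := by
      rw [Finset.sum_ite_mem, Finset.inter_eq_right.mpr hT]
    rw [h2, h3]
    simp only [hg]
    omega
  refine ⟨fun l => ∑ T ∈ ((Finset.range h).powerset).filter (fun T => g T = l), K T, ?_⟩
  intro u hu
  have hcu1 : c * u + 1 ≠ 0 := by
    intro h0
    have hcu : c * u = 1 := by linear_combination h0 - two0
    have hc1 : c ^ (q + 1) * u ^ (q + 1) = 1 := by rw [← mul_pow, hcu, one_pow]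
    rw [hu, mul_one] at hc1
    exact hcU hc1
  have hcuq2 : (c * u + 1) ^ (q ^ 2 - 1) = 1 := by
    have hp := FiniteField.pow_card_sub_one_eq_one (c * u + 1) hcu1
    rw [hF] at hp
    exact hp
  have k1 : u + c ^ q = u * (c * u + 1) ^ q := by
    rw [frobq (c * u) 1, mul_pow, one_pow]
    have e1 : u * (c ^ q * u ^ q + 1) = c ^ q * (u ^ q * u) + u := by ring
    rw [e1, ← pow_succ, hu, mul_one, add_comm]
  -- pointwise factorization of the product
  have hprod : (u + c ^ q) ^ A * (c * u + 1) ^ B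
      = ∏ i ∈ Finset.range h, (α i * u ^ 4 ^ i + β i) := by
    rw [hA, hB, ← Finset.prod_pow_eq_pow_sum, ← Finset.prod_pow_eq_pow_sum,
      ← Finset.prod_mul_distrib]
    apply Finset.prod_congr rfl
    intro i hi
    rcases hd i (Finset.mem_range.mp hi) with h1 | h1
    · simp only [hα, hβ, h1]
      norm_num
      rw [frob i (c * u) 1, mul_pow, one_pow]
    · simp only [hα, hβ, h1]
      norm_num
      rw [frob i u (c ^ q)]
  have expand : u ^ (s + 1) * ((u + c ^ q) ^ A * (c * u + 1) ^ B)
      = ∑ T ∈ (Finset.range h).powerset, K T * u ^ g T := by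
    rw [hprod, Finset.prod_add, Finset.mul_sum]
    apply Finset.sum_congr rfl
    intro T hT
    rw [Finset.prod_mul_distrib, Finset.prod_pow_eq_pow_sum]
    simp only [hK, hg]
    rw [pow_add]
    ring
  have final : ∑ l ∈ E,
      (∑ T ∈ ((Finset.range h).powerset).filter (fun T => g T = l), K T) * u ^ l
      = ∑ T ∈ (Finset.range h).powerset, K T * u ^ g T := by
    rw [← Finset.sum_fiberwise_of_maps_to hmaps (fun T => K T * u ^ g T)]
    apply Finset.sum_congr rfl
    intro l _
    rw [Finset.sum_mul]
    apply Finset.sum_congr rfl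
    intro T hT
    rw [(Finset.mem_filter.mp hT).2]
  calc (u + c ^ q) ^ e * (c * u + 1) ^ (w - e)
      = (u ^ e * ((c * u + 1) ^ q) ^ e) * (c * u + 1) ^ (w - e) := by rw [k1, mul_pow]
    _ = u ^ e * (c * u + 1) ^ (q * e + (w - e)) := by
        rw [← pow_mul, pow_add]; ring
    _ = u ^ e * (c * u + 1) ^ (q ^ 2 - 1 + (A * q + B)) := by rw [hexp]
    _ = u ^ e * (c * u + 1) ^ (A * q + B) := by rw [pow_add, hcuq2, one_mul]
    _ = u ^ (s + 1) * ((u ^ A * ((c * u + 1) ^ q) ^ A) * (c * u + 1) ^ B) := by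
        rw [heA, show A * q = q * A from Nat.mul_comm A q,
          pow_add (c * u + 1) (q * A) B, pow_mul (c * u + 1) q A,
          pow_add u (s + 1) A]
        ring
    _ = u ^ (s + 1) * ((u + c ^ q) ^ A * (c * u + 1) ^ B) := by
        rw [k1, mul_pow]
    _ = ∑ T ∈ (Finset.range h).powerset, K T * u ^ g T := expand
    _ = ∑ l ∈ E,
        (∑ T ∈ ((Finset.range h).powerset).filter (fun T => g T = l), K T) * u ^ l :=
        final.symm
end

section
/- Let q = 2^{2h}, w = 2(q^2−1)/3, c ∈ GF(q^2)* \ U_{q+1}, and let f: U_{q+1} → GF(q^2) be given by f(u) = Σ_{e∈E} a_e u^e for some coefficients a_e ∈ GF(q^2). Then there exist coefficients (b_ℓ)_{ℓ∈E} in GF(q^2) such that (cu+1)^w f((u+c^q)/(cu+1)) = Σ_{ℓ∈E} b_ℓ u^ℓ for all u ∈ U_{q+1}. -/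
open Finset

def s15exp {h : ℕ} (ε : Fin h → Fin 2) : ℕ := 1 + ∑ i : Fin h, ((ε i : ℕ) + 1) * 4 ^ (i : ℕ)

def s15d {h : ℕ} (ε : Fin h → Fin 2) (i : Fin h) : ℕ :=
  if ε i = 1 then 4 ^ (h + (i : ℕ)) else 4 ^ (i : ℕ)

def s15flip {h : ℕ} (ε : Fin h → Fin 2) (t : Finset (Fin h)) : Fin h → Fin 2 :=
  fun i => if i ∈ t then 1 - ε i else ε i

lemma s15exp_inj : ∀ (h : ℕ) (ε ε' : Fin h → Fin 2), s15exp ε = s15exp ε' → ε = ε' := by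
  intro h
  induction h with
  | zero => intro ε ε' _; funext i; exact absurd i.2 (by omega)
  | succ n ih =>
    intro ε ε' he
    unfold s15exp at he
    rw [Fin.sum_univ_succ, Fin.sum_univ_succ] at he
    simp only [Fin.val_zero, pow_zero, mul_one, Fin.val_succ] at he
    have hrw : ∀ (f : Fin (n+1) → Fin 2),
        (∑ i : Fin n, ((f i.succ : ℕ) + 1) * 4 ^ ((i:ℕ)+1)) =
        4 * ∑ i : Fin n, ((f i.succ : ℕ) + 1) * 4 ^ (i:ℕ) := by
      intro f
      rw [Finset.mul_sum]
      refine Finset.sum_congr rfl fun i _ => ?_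
      ring
    rw [hrw ε, hrw ε'] at he
    have h0 : (ε 0 : ℕ) < 2 := (ε 0).2
    have h0' : (ε' 0 : ℕ) < 2 := (ε' 0).2
    have heq0 : (ε 0 : ℕ) = (ε' 0 : ℕ) := by omega
    have := ih (fun i => ε i.succ) (fun i => ε' i.succ) (by unfold s15exp; simp only []; omega)
    funext i
    refine Fin.cases ?_ ?_ i
    · exact Fin.ext heq0
    · intro j; exact congrFun this j

lemma s15fin2 : ∀ x : Fin 2, x = 0 ∨ x = 1 := by decide

lemma s15geom (h : ℕ) : 3 * (∑ i : Fin h, 4 ^ (i : ℕ)) + 1 = 4 ^ h := by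
  rw [Fin.sum_univ_eq_sum_range (fun i => 4 ^ i)]
  induction h with
  | zero => simp
  | succ n ih => rw [Finset.sum_range_succ, pow_succ]; omega

lemma s15exp_split {h : ℕ} (ε : Fin h → Fin 2) :
    s15exp ε = 1 + (∑ i : Fin h, (ε i : ℕ) * 4 ^ (i : ℕ)) + ∑ i : Fin h, 4 ^ (i : ℕ) := by
  unfold s15exp
  rw [add_assoc, ← Finset.sum_add_distrib]
  congr 1
  refine Finset.sum_congr rfl fun i _ => by ring

lemma s15N {h : ℕ} (ε : Fin h → Fin 2) :
    (∑ i : Fin h, s15d ε i) + ∑ i : Fin h, (ε i : ℕ) * 4 ^ (i : ℕ) =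
      (∑ i : Fin h, 4 ^ (i : ℕ)) + 4 ^ h * ∑ i : Fin h, (ε i : ℕ) * 4 ^ (i : ℕ) := by
  rw [Finset.mul_sum, ← Finset.sum_add_distrib, ← Finset.sum_add_distrib]
  refine Finset.sum_congr rfl fun i _ => ?_
  unfold s15d
  rcases s15fin2 (ε i) with h0 | h1
  · rw [h0]; norm_num
  · rw [h1]; norm_num [pow_add]; ring

lemma s15B {h : ℕ} (ε : Fin h → Fin 2) :
    3 * (4 ^ h * s15exp ε) + 1 = 3 * s15exp ε + 3 * (∑ i : Fin h, s15d ε i) + 4 ^ h * 4 ^ h := by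
  have hg := s15geom h
  have hs := s15exp_split ε
  have hN := s15N ε
  set A := ∑ i : Fin h, 4 ^ (i : ℕ) with hA
  set S := ∑ i : Fin h, (ε i : ℕ) * 4 ^ (i : ℕ) with hS
  set N := ∑ i : Fin h, s15d ε i with hNd
  have hN' : N = A + 3 * (A * S) := by
    rw [← hg] at hN
    have : (3 * A + 1) * S = 3 * (A * S) + S := by ring
    omega
  rw [hs, hN', ← hg]
  ring

lemma s15W {h : ℕ} (ε : Fin h → Fin 2) :
    2 * ((4 ^ h) ^ 2 - 1) / 3 + 4 ^ h * s15exp ε =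
      (∑ i : Fin h, s15d ε i) + ((4 ^ h) ^ 2 - 1) + s15exp ε := by
  have hB := s15B ε
  have hQ : (4 ^ h) ^ 2 = 4 ^ h * 4 ^ h := sq (4 ^ h)
  have h1 : 1 ≤ 4 ^ h * 4 ^ h := Nat.one_le_iff_ne_zero.mpr (by positivity)
  rw [hQ]
  omega

lemma s15A {h : ℕ} (ε : Fin h → Fin 2) (t : Finset (Fin h)) :
    s15exp ε + (∑ i ∈ t, s15d ε i) =
      s15exp (s15flip ε t) + (4 ^ h + 1) * ∑ i ∈ t, (ε i : ℕ) * 4 ^ (i : ℕ) := by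
  have hrw : ∀ f : Fin h → ℕ, (∑ i ∈ t, f i) = ∑ i : Fin h, (if i ∈ t then f i else 0) := by
    intro f
    rw [Finset.sum_ite_mem, Finset.univ_inter]
  rw [hrw (s15d ε), hrw (fun i => (ε i : ℕ) * 4 ^ (i : ℕ))]
  unfold s15exp
  rw [Finset.mul_sum, add_assoc, add_assoc, ← Finset.sum_add_distrib, ← Finset.sum_add_distrib]
  congr 1
  refine Finset.sum_congr rfl fun i _ => ?_
  unfold s15d s15flip
  by_cases hit : i ∈ t
  · rw [if_pos hit, if_pos hit, if_pos hit]
    rcases s15fin2 (ε i) with h0 | h1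
    · rw [h0]; norm_num; omega
    · rw [h1]; norm_num [pow_add]; ring
  · rw [if_neg hit, if_neg hit, if_neg hit]
    simp

lemma s15core {h : ℕ} {F : Type} [Field F] (c u : F)
    (hfr : ∀ (x y : F) (j : ℕ), (x + y) ^ (4 ^ j) = x ^ (4 ^ j) + y ^ (4 ^ j))
    (hZ : (c * u + 1) ^ ((4 ^ h) ^ 2 - 1) = 1)
    (hu : u ^ (4 ^ h + 1) = 1)
    (hcu : c * u + 1 ≠ 0)
    (ε : Fin h → Fin 2) :
    (c * u + 1) ^ (2 * ((4 ^ h) ^ 2 - 1) / 3) * ((u + c ^ 4 ^ h) / (c * u + 1)) ^ s15exp ε =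
      ∑ t ∈ (Finset.univ : Finset (Fin h)).powerset,
        c ^ (∑ i ∈ t, s15d ε i) * u ^ s15exp (s15flip ε t) := by
  have huq : u ^ 4 ^ h * u = 1 := by rw [← pow_succ]; exact hu
  have hnum : u + c ^ 4 ^ h = u * (c * u + 1) ^ 4 ^ h := by
    rw [hfr (c * u) 1 h, mul_pow, one_pow]
    have : u * (c ^ 4 ^ h * u ^ 4 ^ h + 1) = c ^ 4 ^ h * (u ^ 4 ^ h * u) + u := by ring
    rw [this, huq, mul_one, add_comm]
  set w := 2 * ((4 ^ h) ^ 2 - 1) / 3 with hw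
  set e := s15exp ε with he
  set N := ∑ i : Fin h, s15d ε i with hN
  have step1 : (c * u + 1) ^ w * ((u + c ^ 4 ^ h) / (c * u + 1)) ^ e =
      u ^ e * (c * u + 1) ^ N := by
    rw [hnum, div_pow, mul_pow, ← pow_mul]
    rw [mul_div_assoc', ← mul_assoc, mul_comm ((c*u+1)^w) (u^e), mul_assoc, ← pow_add]
    rw [s15W ε]
    rw [pow_add, pow_add, hZ, mul_one]
    rw [mul_div_assoc, mul_div_cancel_right₀ _ (pow_ne_zero e hcu)]
  rw [step1]
  have hfac : ∀ i : Fin h, (c * u + 1) ^ s15d ε i = c ^ s15d ε i * u ^ s15d ε i + 1 := by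
    intro i
    unfold s15d
    by_cases hi : ε i = 1 <;> simp only [hi, if_pos, if_neg, if_true, if_false] <;>
      rw [hfr (c * u) 1 _, mul_pow, one_pow]
  have step2 : (c * u + 1) ^ N = ∏ i : Fin h, (c ^ s15d ε i * u ^ s15d ε i + 1) := by
    rw [hN, ← Finset.prod_pow_eq_pow_sum]
    exact Finset.prod_congr rfl fun i _ => hfac i
  rw [step2, Finset.prod_add]
  simp only [Finset.prod_const_one, mul_one]
  rw [Finset.mul_sum]
  refine Finset.sum_congr rfl fun t _ => ?_
  rw [Finset.prod_mul_distrib, Finset.prod_pow_eq_pow_sum, Finset.prod_pow_eq_pow_sum]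
  set K := ∑ i ∈ t, s15d ε i with hK
  have hpow : u ^ e * u ^ K = u ^ s15exp (s15flip ε t) := by
    rw [← pow_add, he, s15A ε t, pow_add, pow_mul, hu, one_pow, mul_one]
  calc u ^ e * (c ^ K * u ^ K) = c ^ K * (u ^ e * u ^ K) := by ring
    _ = c ^ K * u ^ s15exp (s15flip ε t) := by rw [hpow]

theorem stmt_15 (h : ℕ) (hh : 1 ≤ h) (F : Type) [Field F] [Fintype F]
    (hF : Fintype.card F = (4 ^ h) ^ 2) (c : F) (hc0 : c ≠ 0)
    (hcU : c ^ (4 ^ h + 1) ≠ 1) (a : ℕ → F) :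
    let q := 4 ^ h
    let w := 2 * (q ^ 2 - 1) / 3
    let E : Finset ℕ := (Finset.univ : Finset (Fin h → Fin 2)).image
      (fun f => 1 + ∑ i : Fin h, ((f i : ℕ) + 1) * 4 ^ (i : ℕ))
    ∃ b : ℕ → F, ∀ u : F, u ^ (q + 1) = 1 →
      (c * u + 1) ^ w * (∑ e ∈ E, a e * ((u + c ^ q) / (c * u + 1)) ^ e) =
        ∑ l ∈ E, b l * u ^ l := by
  intro q w E
  show ∃ b : ℕ → F, ∀ u : F, u ^ (4 ^ h + 1) = 1 →
      (c * u + 1) ^ (2 * ((4 ^ h) ^ 2 - 1) / 3) *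
        (∑ e ∈ Finset.image s15exp (Finset.univ : Finset (Fin h → Fin 2)),
          a e * ((u + c ^ 4 ^ h) / (c * u + 1)) ^ e) =
        ∑ l ∈ Finset.image s15exp (Finset.univ : Finset (Fin h → Fin 2)), b l * u ^ l
  -- characteristic 2
  obtain ⟨p, hp⟩ := CharP.exists F
  haveI := hp
  have hprime : Nat.Prime p := CharP.char_is_prime F p
  obtain ⟨n, hpn, hcard⟩ := FiniteField.card F p
  have hp2 : p = 2 := by
    have h4 : ((4:ℕ) ^ h) ^ 2 = 2 ^ (4 * h) := by
      rw [show (4:ℕ) = 2 ^ 2 by norm_num, ← pow_mul, ← pow_mul]; ring_nf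
    have hpow : p ^ (n : ℕ) = 2 ^ (4 * h) := by rw [← hcard, hF, h4]
    have hdvd : p ∣ 2 ^ (4 * h) := by
      rw [← hpow]; exact dvd_pow_self p (by positivity)
    exact (Nat.prime_dvd_prime_iff_eq hprime Nat.prime_two).mp
      (Nat.Prime.dvd_of_dvd_pow hprime hdvd)
  subst hp2
  haveI : Fact (Nat.Prime 2) := ⟨Nat.prime_two⟩
  have hfr : ∀ (x y : F) (j : ℕ), (x + y) ^ (4 ^ j) = x ^ (4 ^ j) + y ^ (4 ^ j) := by
    intro x y j
    rw [show (4:ℕ) ^ j = 2 ^ (2 * j) by rw [show (4:ℕ) = 2 ^ 2 by norm_num, ← pow_mul]]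
    exact add_pow_char_pow x y 2 (2 * j)
  refine ⟨fun l => ∑ ε : Fin h → Fin 2, ∑ t ∈ (Finset.univ : Finset (Fin h)).powerset,
      if s15exp (s15flip ε t) = l then a (s15exp ε) * c ^ (∑ i ∈ t, s15d ε i) else 0, ?_⟩
  intro u hu
  have hu0 : u ≠ 0 := by
    intro h0
    rw [h0, zero_pow (by positivity)] at hu
    exact zero_ne_one hu
  have hcu : c * u + 1 ≠ 0 := by
    intro h0
    have hcu1 : c * u = 1 := by
      have : c * u = -1 := by linear_combination h0
      rw [this, CharTwo.neg_eq]
    apply hcU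
    calc c ^ (4 ^ h + 1) = c ^ (4 ^ h + 1) * u ^ (4 ^ h + 1) := by rw [hu, mul_one]
      _ = (c * u) ^ (4 ^ h + 1) := (mul_pow c u _).symm
      _ = 1 := by rw [hcu1, one_pow]
  have hZ : (c * u + 1) ^ ((4 ^ h) ^ 2 - 1) = 1 := by
    have := FiniteField.pow_card_sub_one_eq_one (c * u + 1) hcu
    rwa [hF] at this
  rw [Finset.mul_sum]
  rw [Finset.sum_image (fun x _ y _ hxy => s15exp_inj h x y hxy),
      Finset.sum_image (fun x _ y _ hxy => s15exp_inj h x y hxy)]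
  simp only [Finset.sum_mul]
  rw [Finset.sum_comm]
  refine Finset.sum_congr rfl fun ε _ => ?_
  -- LHS for fixed ε
  have hL : (c * u + 1) ^ (2 * ((4 ^ h) ^ 2 - 1) / 3) *
      (a (s15exp ε) * ((u + c ^ 4 ^ h) / (c * u + 1)) ^ s15exp ε) =
      ∑ t ∈ (Finset.univ : Finset (Fin h)).powerset,
        a (s15exp ε) * c ^ (∑ i ∈ t, s15d ε i) * u ^ s15exp (s15flip ε t) := by
    calc (c * u + 1) ^ (2 * ((4 ^ h) ^ 2 - 1) / 3) *
        (a (s15exp ε) * ((u + c ^ 4 ^ h) / (c * u + 1)) ^ s15exp ε)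
        = a (s15exp ε) * ((c * u + 1) ^ (2 * ((4 ^ h) ^ 2 - 1) / 3) *
            ((u + c ^ 4 ^ h) / (c * u + 1)) ^ s15exp ε) := by ring
      _ = a (s15exp ε) * ∑ t ∈ (Finset.univ : Finset (Fin h)).powerset,
            c ^ (∑ i ∈ t, s15d ε i) * u ^ s15exp (s15flip ε t) := by
            rw [s15core c u hfr hZ hu hcu ε]
      _ = _ := by
            rw [Finset.mul_sum]
            exact Finset.sum_congr rfl fun t _ => by ring
  rw [hL]
  -- RHS for fixed ε (after sum_comm, outer sum is over ε, inner over l)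
  rw [Finset.sum_comm]
  refine Finset.sum_congr rfl fun t _ => ?_
  -- goal : Σ_{l ∈ image} (if L = l then A else 0) * u ^ l = A * u ^ L  (flipped sides)
  symm
  rw [Finset.sum_eq_single (s15flip ε t)]
  · rw [if_pos rfl]
  · intro x _ hx
    rw [if_neg (fun hcontra => hx (s15exp_inj h x (s15flip ε t) hcontra.symm)), zero_mul]
  · intro habs; exact absurd (Finset.mem_univ _) habs
end

section
/- Let q = 2^m with m ≥ 2, β a primitive (q+1)-th root of unity in GF(q^2), and for 1 ≤ u ≤ q/2 let C_u be the cyclic code of length q+1 over GF(q) with generator polynomial g_u(x) = ∏_{i=u}^{q/2} M_{β^i}(x), where M_{β^i}(x) = (x−β^i)(x−β^{−i}) is the minimal polynomial of β^i over GF(q). Then C_u is a [q+1, 2u−1, q−2u+3] MDS code. -/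
open Polynomial

lemma coeff_vecPoly {F : Type*} [Semiring F] {n : ℕ} (v : Fin n → F) (j : ℕ) :
    (∑ i : Fin n, Polynomial.C (v i) * Polynomial.X ^ (i : ℕ)).coeff j =
      if h : j < n then v ⟨j, h⟩ else 0 := by
  rw [Polynomial.finset_sum_coeff]
  simp only [Polynomial.coeff_C_mul, Polynomial.coeff_X_pow, mul_ite, mul_one, mul_zero]
  split
  · next h =>
    rw [Finset.sum_eq_single (⟨j, h⟩ : Fin n)]
    · simp
    · intro b _ hb
      simp only [ite_eq_right_iff]
      intro hjb
      exact absurd (Fin.ext hjb.symm) hb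
    · simp
  · next h =>
    apply Finset.sum_eq_zero
    intro i _
    simp only [ite_eq_right_iff]
    intro hji
    exact absurd (hji ▸ i.isLt) h

lemma degree_vecPoly_lt {F : Type*} [Semiring F] {n : ℕ} (v : Fin n → F) :
    (∑ i : Fin n, Polynomial.C (v i) * Polynomial.X ^ (i : ℕ)).degree < (n : WithBot ℕ) := by
  rw [Polynomial.degree_lt_iff_coeff_zero]
  intro k hk
  rw [coeff_vecPoly]
  simp [Nat.not_lt.mpr hk]

lemma vecPoly_of_degree_lt {F : Type*} [Semiring F] {n : ℕ} (p : Polynomial F)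
    (hp : p.degree < (n : WithBot ℕ)) :
    (∑ i : Fin n, Polynomial.C (p.coeff i) * Polynomial.X ^ (i : ℕ)) = p := by
  ext j
  rw [coeff_vecPoly]
  split
  · rfl
  · next h =>
    exact (Polynomial.coeff_eq_zero_of_degree_lt (lt_of_lt_of_le hp (by exact_mod_cast Nat.not_lt.mp h))).symm

theorem stmt_16 (m : ℕ) (hm : 2 ≤ m) (F K : Type) [Field F] [Field K]
    [Fintype F] [Fintype K] [Algebra F K] [DecidableEq F]
    (hF : Fintype.card F = 2 ^ m) (hK : Fintype.card K = (2 ^ m) ^ 2)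
    (β : K) (hβ : β ^ (2 ^ m + 1) = 1)
    (hβprim : ∀ k, 0 < k → k < 2 ^ m + 1 → β ^ k ≠ 1)
    (u : ℕ) (hu1 : 1 ≤ u) (hu2 : u ≤ 2 ^ m / 2)
    (g : Polynomial F)
    (hg : Polynomial.map (algebraMap F K) g =
      ∏ i ∈ Finset.Icc u (2 ^ m / 2),
        (Polynomial.X - Polynomial.C (β ^ i)) * (Polynomial.X - Polynomial.C (β⁻¹ ^ i)))
    (C : Set (Fin (2 ^ m + 1) → F))
    (hC : C = {v | g ∣ ∑ i : Fin (2 ^ m + 1), Polynomial.C (v i) * Polynomial.X ^ (i : ℕ)}) :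
    Nat.card C = (2 ^ m) ^ (2 * u - 1) ∧
      2 ^ m - 2 * u + 3 = (2 ^ m + 1) - (2 * u - 1) + 1 ∧
      (∀ v ∈ C, v ≠ 0 → 2 ^ m - 2 * u + 3 ≤ hammingNorm v) ∧
      (∃ v ∈ C, v ≠ 0 ∧ hammingNorm v = 2 ^ m - 2 * u + 3) := by
  subst hC
  have hφ : Function.Injective (algebraMap F K) := (algebraMap F K).injective
  set q : ℕ := 2 ^ m with hqdef
  set n : ℕ := q + 1 with hndef
  set s : ℕ := q / 2 with hsdef
  have hq4 : 4 ≤ q := by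
    calc 4 = 2 ^ 2 := by norm_num
    _ ≤ 2 ^ m := Nat.pow_le_pow_right (by norm_num) hm
  have heven : 2 * s = q := by
    rw [hsdef]
    exact Nat.mul_div_cancel' (dvd_pow_self 2 (by omega : m ≠ 0))
  have h2u : 2 * u ≤ q := by omega
  set CC : Set (Fin n → F) :=
    {v | g ∣ ∑ i : Fin n, Polynomial.C (v i) * Polynomial.X ^ (i : ℕ)} with hCC
  have hβ0 : β ≠ 0 := by
    intro h
    rw [h] at hβ
    simp [zero_pow] at hβ
  have hβinj : ∀ i j : ℕ, i < n → j < n → β ^ i = β ^ j → i = j := by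
    intro i j hi hj hij
    rcases Nat.lt_trichotomy i j with h | h | h
    · exfalso
      apply hβprim (j - i) (by omega) (by omega)
      have h1 : β ^ (j - i) * β ^ i = 1 * β ^ i := by
        rw [← pow_add, Nat.sub_add_cancel (le_of_lt h), one_mul]
        exact hij.symm
      exact mul_right_cancel₀ (pow_ne_zero i hβ0) h1
    · exact h
    · exfalso
      apply hβprim (i - j) (by omega) (by omega)
      have h1 : β ^ (i - j) * β ^ j = 1 * β ^ j := by
        rw [← pow_add, Nat.sub_add_cancel (le_of_lt h), one_mul]
        exact hij
      exact mul_right_cancel₀ (pow_ne_zero j hβ0) h1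
  have hβinv : ∀ i : ℕ, i ≤ n → β⁻¹ ^ i = β ^ (n - i) := by
    intro i hi
    have h1 : β ^ (n - i) * β ^ i = 1 := by
      rw [← pow_add, Nat.sub_add_cancel hi]
      exact hβ
    rw [inv_pow]
    exact (eq_inv_of_mul_eq_one_left h1).symm
  have hgK_monic : (Polynomial.map (algebraMap F K) g).Monic := by
    rw [hg]
    exact Polynomial.monic_prod_of_monic _ _ fun i _ =>
      (Polynomial.monic_X_sub_C _).mul (Polynomial.monic_X_sub_C _)
  have hg0 : g ≠ 0 := by
    intro h
    rw [h, Polynomial.map_zero] at hgK_monic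
    exact hgK_monic.ne_zero rfl
  have hdegg : g.natDegree = q + 2 - 2 * u := by
    have h1 : (Polynomial.map (algebraMap F K) g).natDegree = g.natDegree :=
      Polynomial.natDegree_map_eq_of_injective hφ g
    rw [hg, Polynomial.natDegree_prod _ _ (fun i _ =>
      ((Polynomial.monic_X_sub_C _).mul (Polynomial.monic_X_sub_C _)).ne_zero)] at h1
    have h2 : ∀ i ∈ Finset.Icc u s,
        ((Polynomial.X - Polynomial.C (β ^ i)) * (Polynomial.X - Polynomial.C (β⁻¹ ^ i))).natDegree = 2 := by
      intro i _
      rw [Polynomial.natDegree_mul (Polynomial.X_sub_C_ne_zero _) (Polynomial.X_sub_C_ne_zero _),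
        Polynomial.natDegree_X_sub_C, Polynomial.natDegree_X_sub_C]
    rw [Finset.sum_congr rfl h2, Finset.sum_const, Nat.card_Icc, smul_eq_mul] at h1
    omega
  have hroot : ∀ t : ℕ, u ≤ t → t ≤ n - u →
      (Polynomial.X - Polynomial.C (β ^ t)) ∣ Polynomial.map (algebraMap F K) g := by
    intro t ht1 ht2
    rw [hg]
    by_cases h : t ≤ s
    · exact (dvd_mul_right _ _).trans
        (Finset.dvd_prod_of_mem
          (fun i => (Polynomial.X - Polynomial.C (β ^ i)) * (Polynomial.X - Polynomial.C (β⁻¹ ^ i)))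
          (Finset.mem_Icc.mpr ⟨ht1, h⟩))
    · have hts : s + 1 ≤ t := by omega
      have hmem : n - t ∈ Finset.Icc u s := Finset.mem_Icc.mpr ⟨by omega, by omega⟩
      have hβt : β⁻¹ ^ (n - t) = β ^ t := by
        rw [hβinv (n - t) (by omega)]
        congr 1
        omega
      calc Polynomial.X - Polynomial.C (β ^ t)
          = Polynomial.X - Polynomial.C (β⁻¹ ^ (n - t)) := by rw [hβt]
        _ ∣ (Polynomial.X - Polynomial.C (β ^ (n - t))) * (Polynomial.X - Polynomial.C (β⁻¹ ^ (n - t))) :=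
            dvd_mul_left _ _
        _ ∣ _ := Finset.dvd_prod_of_mem
            (fun i => (Polynomial.X - Polynomial.C (β ^ i)) * (Polynomial.X - Polynomial.C (β⁻¹ ^ i))) hmem
  have heval : ∀ v ∈ CC, ∀ t : ℕ, u ≤ t → t ≤ n - u →
      ∑ i : Fin n, algebraMap F K (v i) * (β ^ t) ^ (i : ℕ) = 0 := by
    intro v hv t ht1 ht2
    have hvd : g ∣ ∑ i : Fin n, Polynomial.C (v i) * Polynomial.X ^ (i : ℕ) := hv
    have hdvd : (Polynomial.X - Polynomial.C (β ^ t)) ∣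
        Polynomial.map (algebraMap F K) (∑ i : Fin n, Polynomial.C (v i) * Polynomial.X ^ (i : ℕ)) :=
      (hroot t ht1 ht2).trans (Polynomial.map_dvd _ hvd)
    have hr := Polynomial.dvd_iff_isRoot.mp hdvd
    rw [Polynomial.IsRoot] at hr
    rw [← hr, Polynomial.map_sum]
    rw [Polynomial.eval_finset_sum]
    congr 1
    funext i
    simp [Polynomial.map_mul]
  have hlow : ∀ v ∈ CC, hammingNorm v ≤ q - 2 * u + 2 → v = 0 := by
    intro v hv hw
    classical
    set S : Finset (Fin n) := Finset.univ.filter (fun i => v i ≠ 0) with hS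
    have hScard : hammingNorm v = S.card := rfl
    set w := S.card with hwdef
    set e := S.orderIsoOfFin rfl with he
    set f : Fin w → K := fun i => β ^ (((e i : Fin n)) : ℕ) with hf
    set a : Fin w → K := fun i => algebraMap F K (v (e i)) * β ^ (u * (((e i : Fin n)) : ℕ)) with ha
    have hfinj : Function.Injective f := by
      intro i₁ i₂ h
      have h1 : (((e i₁ : Fin n)) : ℕ) = (((e i₂ : Fin n)) : ℕ) :=
        hβinj _ _ (Fin.isLt _) (Fin.isLt _) h
      have h2 : (e i₁ : Fin n) = (e i₂ : Fin n) := Fin.ext h1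
      exact e.injective (Subtype.ext h2)
    have hkey : ∀ j : Fin w, ∑ i : Fin w, a i * f i ^ (j : ℕ) = 0 := by
      intro j
      have hjw : (j : ℕ) < w := j.isLt
      have ht1 : u ≤ u + (j : ℕ) := Nat.le_add_right _ _
      have ht2 : u + (j : ℕ) ≤ n - u := by omega
      have hsum := heval v hv (u + (j : ℕ)) ht1 ht2
      have hstep : ∀ i : Fin w,
          a i * f i ^ (j : ℕ) = algebraMap F K (v (e i)) * (β ^ (u + (j : ℕ))) ^ (((e i : Fin n)) : ℕ) := by
        intro i
        rw [ha, hf]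
        simp only []
        rw [mul_assoc, ← pow_mul, ← pow_mul, ← pow_add]
        congr 2
        ring
      rw [Finset.sum_congr rfl (fun i _ => hstep i)]
      have hreindex : ∑ i : Fin w,
          algebraMap F K (v (e i)) * (β ^ (u + (j : ℕ))) ^ (((e i : Fin n)) : ℕ)
          = ∑ x ∈ S, algebraMap F K (v x) * (β ^ (u + (j : ℕ))) ^ ((x : ℕ)) := by
        rw [← Finset.sum_coe_sort S (fun x => algebraMap F K (v x) * (β ^ (u + (j : ℕ))) ^ ((x : Fin n) : ℕ))]
        exact Fintype.sum_equiv e.toEquiv _ _ (fun i => rfl)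
      rw [hreindex, ← hsum]
      apply Finset.sum_subset (Finset.subset_univ S)
      intro x _ hx
      have : v x = 0 := by
        by_contra hvx
        exact hx (Finset.mem_filter.mpr ⟨Finset.mem_univ _, hvx⟩)
      simp [this]
    have ha0 : a = 0 := Matrix.eq_zero_of_forall_pow_sum_mul_pow_eq_zero hfinj hkey
    funext i
    by_contra hvi
    have hiS : i ∈ S := Finset.mem_filter.mpr ⟨Finset.mem_univ _, hvi⟩
    set i' := e.symm ⟨i, hiS⟩ with hi'
    have hei' : (e i' : Fin n) = i := by rw [hi', OrderIso.apply_symm_apply]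
    have := congrFun ha0 i'
    rw [ha] at this
    simp only [Pi.zero_apply] at this
    rw [hei'] at this
    rcases mul_eq_zero.mp this with h | h
    · exact hvi (hφ (by simpa using h))
    · exact pow_ne_zero _ hβ0 h
  -- part 3
  have part3 : ∀ v ∈ CC, v ≠ 0 → q - 2 * u + 3 ≤ hammingNorm v := by
    intro v hv hv0
    by_contra h
    exact hv0 (hlow v hv (by omega))
  -- part 4
  have hdegn : g.natDegree < n := by omega
  have hgdeg_lt : g.degree < (n : WithBot ℕ) :=
    lt_of_le_of_lt Polynomial.degree_le_natDegree (by exact_mod_cast hdegn)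
  set v₀ : Fin n → F := fun i => g.coeff i with hv₀
  have hvg : (∑ i : Fin n, Polynomial.C (v₀ i) * Polynomial.X ^ (i : ℕ)) = g :=
    vecPoly_of_degree_lt g hgdeg_lt
  have hv₀mem : v₀ ∈ CC := by
    show g ∣ _
    rw [hvg]
  have hv₀ne : v₀ ≠ 0 := by
    intro h0
    have := congrFun h0 ⟨g.natDegree, hdegn⟩
    simp only [hv₀, Pi.zero_apply] at this
    exact Polynomial.leadingCoeff_ne_zero.mpr hg0 this
  have hv₀norm_le : hammingNorm v₀ ≤ q - 2 * u + 3 := by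
    have hsub : ∀ i : Fin n, v₀ i ≠ 0 → (i : ℕ) < g.natDegree + 1 := by
      intro i hi
      by_contra hc
      exact hi (Polynomial.coeff_eq_zero_of_natDegree_lt (by omega))
    have hcard : (Finset.univ.filter (fun i : Fin n => v₀ i ≠ 0)).card ≤
        (Finset.range (g.natDegree + 1)).card := by
      exact Finset.card_le_card_of_injOn (fun i => (i : ℕ))
        (fun i hi => Finset.mem_range.mpr (hsub i (Finset.mem_filter.mp hi).2))
        (fun a _ b _ hab => Fin.ext hab)
    rw [Finset.card_range] at hcard
    calc hammingNorm v₀ ≤ g.natDegree + 1 := hcard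
      _ ≤ q - 2 * u + 3 := by omega
  have part4 : ∃ v ∈ CC, v ≠ 0 ∧ hammingNorm v = q - 2 * u + 3 :=
    ⟨v₀, hv₀mem, hv₀ne, le_antisymm hv₀norm_le (part3 v₀ hv₀mem hv₀ne)⟩
  -- part 1
  set k : ℕ := 2 * u - 1 with hk
  have hnk : g.natDegree + k = n := by omega
  have part1 : Nat.card CC = q ^ (2 * u - 1) := by
    classical
    set ψ : (Fin k → F) → (Fin n → F) :=
      fun f i => (g * ∑ j : Fin k, Polynomial.C (f j) * Polynomial.X ^ (j : ℕ)).coeff i with hψ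
    have hdeglt : ∀ f : Fin k → F,
        (g * ∑ j : Fin k, Polynomial.C (f j) * Polynomial.X ^ (j : ℕ)).degree < (n : WithBot ℕ) := by
      intro f
      set P := ∑ j : Fin k, Polynomial.C (f j) * Polynomial.X ^ (j : ℕ) with hP
      by_cases hP0 : P = 0
      · rw [hP0, mul_zero, Polynomial.degree_zero]
        exact WithBot.bot_lt_coe _
      · have hgP0 : g * P ≠ 0 := mul_ne_zero hg0 hP0
        rw [← Polynomial.natDegree_lt_iff_degree_lt hgP0]
        have h1 : P.natDegree < k :=
          (Polynomial.natDegree_lt_iff_degree_lt hP0).mpr (degree_vecPoly_lt f)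
        rw [Polynomial.natDegree_mul hg0 hP0]
        omega
    have hmem : ∀ f : Fin k → F, ψ f ∈ CC := by
      intro f
      show g ∣ _
      rw [vecPoly_of_degree_lt _ (hdeglt f)]
      exact Dvd.intro _ rfl
    have hinj : Function.Injective ψ := by
      intro f₁ f₂ hf
      have hpoly : g * (∑ j : Fin k, Polynomial.C (f₁ j) * Polynomial.X ^ (j : ℕ)) =
          g * (∑ j : Fin k, Polynomial.C (f₂ j) * Polynomial.X ^ (j : ℕ)) := by
        ext j
        by_cases hj : j < n
        · exact congrFun hf ⟨j, hj⟩
        · rw [Polynomial.coeff_eq_zero_of_degree_lt, Polynomial.coeff_eq_zero_of_degree_lt]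
          · exact lt_of_lt_of_le (hdeglt f₂) (by exact_mod_cast Nat.not_lt.mp hj)
          · exact lt_of_lt_of_le (hdeglt f₁) (by exact_mod_cast Nat.not_lt.mp hj)
      have hc := mul_left_cancel₀ hg0 hpoly
      funext j
      have h1 : (∑ j' : Fin k, Polynomial.C (f₁ j') * Polynomial.X ^ (j' : ℕ)).coeff (j : ℕ) =
          (∑ j' : Fin k, Polynomial.C (f₂ j') * Polynomial.X ^ (j' : ℕ)).coeff (j : ℕ) := by
        rw [hc]
      rw [coeff_vecPoly, coeff_vecPoly] at h1
      simpa [j.isLt] using h1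
    have hsurj : ∀ v ∈ CC, ∃ f : Fin k → F, ψ f = v := by
      intro v hv
      obtain ⟨h, hh⟩ := (hv : g ∣ _)
      refine ⟨fun j => h.coeff j, ?_⟩
      have hPh : (∑ j : Fin k, Polynomial.C (h.coeff (j : ℕ)) * Polynomial.X ^ (j : ℕ)) = h := by
        apply vecPoly_of_degree_lt
        by_cases hh0 : h = 0
        · rw [hh0, Polynomial.degree_zero]
          exact WithBot.bot_lt_coe _
        · rw [← Polynomial.natDegree_lt_iff_degree_lt hh0]
          have hp0 : (∑ i : Fin n, Polynomial.C (v i) * Polynomial.X ^ (i : ℕ)) ≠ 0 := by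
            rw [hh]
            exact mul_ne_zero hg0 hh0
          have hdp : (∑ i : Fin n, Polynomial.C (v i) * Polynomial.X ^ (i : ℕ)).natDegree < n :=
            (Polynomial.natDegree_lt_iff_degree_lt hp0).mpr (degree_vecPoly_lt v)
          rw [hh, Polynomial.natDegree_mul hg0 hh0] at hdp
          omega
      funext i
      show (g * _).coeff (i : ℕ) = v i
      rw [hPh, ← hh, coeff_vecPoly]
      simp [i.isLt]
    have hbij : Function.Bijective (fun f : Fin k → F => (⟨ψ f, hmem f⟩ : CC)) := by
      constructor
      · intro f₁ f₂ hf
        exact hinj (congrArg Subtype.val hf)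
      · rintro ⟨v, hv⟩
        obtain ⟨f, hf⟩ := hsurj v hv
        exact ⟨f, Subtype.ext hf⟩
    rw [← Nat.card_congr (Equiv.ofBijective _ hbij)]
    rw [Nat.card_eq_fintype_card, Fintype.card_fun, Fintype.card_fin, hF]
  exact ⟨part1, by omega, part3, part4⟩
end

section
/- Let q = 2^m with m ≥ 2 and C_u as above. Then C_u ∩ C_u^⊥ = {0}, i.e., C_u is a linear complementary dual (LCD, reversible) code. -/
open Polynomial Finset

lemma coeff_sum_C_X {R : Type*} [Semiring R] (N : ℕ) (a : ℕ → R) (k : ℕ) :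
    (∑ i ∈ Finset.range N, C (a i) * X ^ i).coeff k = if k < N then a k else 0 := by
  rw [finset_sum_coeff]
  simp only [coeff_C_mul, coeff_X_pow]
  simp only [mul_ite, mul_one, mul_zero]
  rw [Finset.sum_ite_eq]
  simp [Finset.mem_range]

lemma natDegree_sum_C_X_lt {R : Type*} [Semiring R] [Nontrivial R] (N : ℕ) (hN : 0 < N)
    (a : ℕ → R) : (∑ i ∈ Finset.range N, C (a i) * X ^ i).natDegree < N := by
  have h : (∑ i ∈ Finset.range N, C (a i) * X ^ i).natDegree ≤ N - 1 := by
    apply Polynomial.natDegree_sum_le_of_forall_le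
    intro i hi
    simp only [Finset.mem_range] at hi
    calc (C (a i) * X ^ i).natDegree ≤ (X ^ i : R[X]).natDegree := natDegree_C_mul_le _ _
      _ = i := natDegree_X_pow i
      _ ≤ N - 1 := by omega
  omega

lemma prod_X_sub_C_dvd_of_roots {K : Type*} [Field K] {ι : Type*} (s : Finset ι) (b : ι → K)
    (hinj : Set.InjOn b s) (p : K[X]) (hroot : ∀ j ∈ s, p.eval (b j) = 0) :
    (∏ j ∈ s, (X - C (b j))) ∣ p := by
  classical
  induction s using Finset.induction_on generalizing p with
  | empty => simpa using one_dvd p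
  | @insert a s ha ih =>
    have hroota : p.eval (b a) = 0 := hroot a (Finset.mem_insert_self a s)
    obtain ⟨q, hq⟩ := (dvd_iff_isRoot).mpr hroota
    rw [Finset.prod_insert ha, hq]
    refine mul_dvd_mul_left _ (ih ?_ q ?_)
    · exact hinj.mono (by simp [Finset.subset_insert])
    · intro j hj
      have hj' : p.eval (b j) = 0 := hroot j (Finset.mem_insert_of_mem hj)
      rw [hq, eval_mul] at hj'
      have hne : b j - b a ≠ 0 := by
        intro h
        have : b j = b a := by linear_combination h
        have := hinj (Finset.mem_insert_of_mem hj) (Finset.mem_insert_self a s) this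
        exact ha (this ▸ hj)
      simpa [sub_eq_zero] using (mul_eq_zero.mp hj').resolve_left (by
        simp only [eval_sub, eval_X, eval_C]; exact hne)

lemma sum_C_coeff_X_eq {F : Type*} [Semiring F] (N : ℕ) (p : Polynomial F)
    (h : p.natDegree < N) : ∑ i : Fin N, C (p.coeff i) * X ^ (i : ℕ) = p := by
  rw [Fin.sum_univ_eq_sum_range (fun i => C (p.coeff i) * X ^ i)]
  conv_rhs => rw [p.as_sum_range' N h]
  exact Finset.sum_congr rfl fun i _ => C_mul_X_pow_eq_monomial

lemma isCoprime_of_eval_ne_zero {K : Type*} [Field K] (p : K[X]) (a : K) (h : p.eval a ≠ 0) :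
    IsCoprime p (X - C a) := by
  rw [isCoprime_comm]
  exact ((Polynomial.irreducible_X_sub_C a).coprime_iff_not_dvd).mpr
    (fun hd => h ((dvd_iff_isRoot.mp hd)))

lemma pow_inj_of_prim {K : Type*} [Field K] {N : ℕ} {β : K} (hβ : β ^ N = 1)
    (hprim : ∀ k, 0 < k → k < N → β ^ k ≠ 1)
    {a b : ℕ} (ha : a < N) (hb : b < N) (hab : β ^ a = β ^ b) : a = b := by
  have hβ0 : β ≠ 0 := by
    intro h
    rw [h, zero_pow (by omega : N ≠ 0)] at hβ
    exact zero_ne_one hβ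
  wlog hle : a ≤ b generalizing a b
  · exact (this hb ha hab.symm (by omega)).symm
  by_contra hne
  have h1 : β ^ (b - a) = 1 := by
    have hpow : β ^ a * β ^ (b - a) = β ^ a * 1 := by
      rw [mul_one, ← pow_add, Nat.add_sub_cancel' hle, hab]
    exact mul_left_cancel₀ (pow_ne_zero a hβ0) hpow
  exact absurd h1 (hprim (b - a) (by omega) (by omega))

lemma inv_pow_eq_pow_sub {K : Type*} [Field K] {N : ℕ} {β : K} (hβ : β ^ N = 1) {i : ℕ}
    (hi : i ≤ N) : β⁻¹ ^ i = β ^ (N - i) := by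
  rw [inv_pow]
  apply inv_eq_of_mul_eq_one_right
  rw [← pow_add, Nat.add_sub_cancel' hi, hβ]

theorem stmt_17 (m : ℕ) (hm : 2 ≤ m) (F K : Type) [Field F] [Field K]
    [Fintype F] [Fintype K] [Algebra F K]
    (hF : Fintype.card F = 2 ^ m) (hK : Fintype.card K = (2 ^ m) ^ 2)
    (β : K) (hβ : β ^ (2 ^ m + 1) = 1)
    (hβprim : ∀ k, 0 < k → k < 2 ^ m + 1 → β ^ k ≠ 1)
    (u : ℕ) (hu1 : 1 ≤ u) (hu2 : u ≤ 2 ^ m / 2)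
    (g : Polynomial F)
    (hg : Polynomial.map (algebraMap F K) g =
      ∏ i ∈ Finset.Icc u (2 ^ m / 2),
        (Polynomial.X - Polynomial.C (β ^ i)) * (Polynomial.X - Polynomial.C (β⁻¹ ^ i)))
    (C : Set (Fin (2 ^ m + 1) → F))
    (hC : C = {v | g ∣ ∑ i : Fin (2 ^ m + 1), Polynomial.C (v i) * Polynomial.X ^ (i : ℕ)}) :
    ∀ v ∈ C, (∀ w ∈ C, ∑ i, v i * w i = 0) → v = 0 := by
  subst hC
  classical
  set N : ℕ := 2 ^ m + 1 with hNdef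
  set t : ℕ := 2 ^ (m - 1) with htdef
  have h2t : 2 ^ m = 2 * t := by
    rw [htdef, ← pow_succ']
    congr 1
    omega
  have ht1 : 1 ≤ t := Nat.one_le_two_pow
  have hNt : N = 2 * t + 1 := by omega
  have hut : u ≤ t := by omega
  have hq2t : 2 ^ m / 2 = t := by omega
  rw [hq2t] at hg
  -- basic β facts
  have hinj : ∀ a b : ℕ, a < N → b < N → β ^ a = β ^ b → a = b :=
    fun a b ha hb hab => pow_inj_of_prim hβ hβprim ha hb hab
  have hβinv : ∀ i : ℕ, i ≤ N → β⁻¹ ^ i = β ^ (N - i) :=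
    fun i hi => inv_pow_eq_pow_sub hβ hi
  -- gK as a product of distinct linear factors
  set gK : K[X] := g.map (algebraMap F K) with hgKdef
  have hgKmonic : gK.Monic := by
    rw [hg]
    exact Polynomial.monic_prod_of_monic _ _
      (fun i _ => (monic_X_sub_C _).mul (monic_X_sub_C _))
  have hg0 : g ≠ 0 := by
    intro h
    rw [h, Polynomial.map_zero] at hgKdef
    exact hgKmonic.ne_zero hgKdef
  set S1 : Finset ℕ := Finset.Icc u t with hS1def
  set S2 : Finset ℕ := (Finset.Icc u t).image (fun i => N - i) with hS2def
  have hS : ∀ j ∈ S1 ∪ S2, u ≤ j ∧ j ≤ N - u := by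
    intro j hj
    rcases Finset.mem_union.mp hj with h | h
    · rw [hS1def, Finset.mem_Icc] at h; omega
    · rw [hS2def] at h
      obtain ⟨i, hi, rfl⟩ := Finset.mem_image.mp h
      rw [Finset.mem_Icc] at hi; omega
  have hS' : ∀ j, u ≤ j → j ≤ N - u → j ∈ S1 ∪ S2 := by
    intro j h1 h2
    by_cases hc : j ≤ t
    · exact Finset.mem_union_left _ (Finset.mem_Icc.mpr ⟨h1, hc⟩)
    · refine Finset.mem_union_right _ (Finset.mem_image.mpr
        ⟨N - j, Finset.mem_Icc.mpr ⟨by omega, by omega⟩, by omega⟩)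
  have hgprod : gK = ∏ j ∈ S1 ∪ S2, (X - C (β ^ j)) := by
    rw [hg, Finset.prod_mul_distrib]
    have h2 : ∏ i ∈ Finset.Icc u t, (X - C (β⁻¹ ^ i)) = ∏ j ∈ S2, (X - C (β ^ j)) := by
      rw [hS2def, Finset.prod_image (fun a ha b hb hab => by
        rw [Finset.coe_Icc, Set.mem_Icc] at ha hb; omega)]
      exact Finset.prod_congr rfl fun i hi => by
        rw [Finset.mem_Icc] at hi
        rw [hβinv i (by omega)]
    rw [h2, ← Finset.prod_union]
    rw [Finset.disjoint_left]
    intro j hj1 hj2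
    rw [hS1def, Finset.mem_Icc] at hj1
    rw [hS2def] at hj2
    obtain ⟨i, hi, hji⟩ := Finset.mem_image.mp hj2
    rw [Finset.mem_Icc] at hi
    omega
  have hgdvd : gK ∣ (X : K[X]) ^ N - 1 := by
    rw [hgprod]
    apply prod_X_sub_C_dvd_of_roots
    · intro a ha b hb hab
      have h1 := hS a ha
      have h2 := hS b hb
      exact hinj a b (by omega) (by omega) hab
    · intro j hj
      simp only [eval_sub, eval_pow, eval_X, eval_one]
      rw [← pow_mul, mul_comm, pow_mul, hβ, one_pow, sub_self]
  -- the polynomial of v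
  intro v hv hperp
  set vv : ℕ → F := fun n => v ⟨n % N, Nat.mod_lt n (by omega)⟩ with hvvdef
  have hvvv : ∀ i : Fin N, vv ↑i = v i := by
    intro i
    simp [hvvdef, Nat.mod_eq_of_lt i.isLt]
  set V : Polynomial F := ∑ i ∈ Finset.range N, C (vv i) * X ^ i with hVdef
  have hVfin : ∑ i : Fin N, C (v i) * X ^ (i : ℕ) = V := by
    rw [hVdef, ← Fin.sum_univ_eq_sum_range (fun i => C (vv i) * X ^ i) N]
    exact Finset.sum_congr rfl fun i _ => by rw [hvvv i]
  have hgV : g ∣ V := by rw [← hVfin]; exact hv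
  set VK : K[X] := V.map (algebraMap F K) with hVKdef
  have hVK : VK = ∑ i ∈ Finset.range N, C (algebraMap F K (vv i)) * X ^ i := by
    rw [hVKdef, hVdef, Polynomial.map_sum]
    exact Finset.sum_congr rfl fun i _ => by
      rw [Polynomial.map_mul, Polynomial.map_pow, map_C, map_X]
  have hVKeval : ∀ x : K, VK.eval x = ∑ i ∈ Finset.range N, algebraMap F K (vv i) * x ^ i := by
    intro x
    rw [hVK, eval_finset_sum]
    exact Finset.sum_congr rfl fun i _ => by rw [eval_mul, eval_pow, eval_C, eval_X]
  have hgKVK : gK ∣ VK := Polynomial.map_dvd _ hgV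
  -- roots from divisibility
  have hroot1 : ∀ j, u ≤ j → j ≤ N - u → VK.eval (β ^ j) = 0 := by
    intro j h1 h2
    have hdvd : (X - C (β ^ j)) ∣ VK :=
      dvd_trans (hgprod ▸ Finset.dvd_prod_of_mem _ (hS' j h1 h2)) hgKVK
    obtain ⟨w, hw⟩ := hdvd
    rw [hw, eval_mul, eval_sub, eval_X, eval_C, sub_self, zero_mul]
  -- roots from orthogonality
  have hroot2 : ∀ j, j < N → (j < u ∨ N - u < j) → VK.eval (β ^ j) = 0 := by
    intro j hjN hj
    set b : K := β ^ j with hbdef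
    have hbN : b ^ N = 1 := by rw [hbdef, ← pow_mul, mul_comm, pow_mul, hβ, one_pow]
    set W : K[X] := ∑ i ∈ Finset.range N, C (b ^ i) * X ^ i with hWdef
    have hWmul : W * (C b * X - 1) = X ^ N - 1 := by
      have hgs := geom_sum_mul (C b * X) N
      rw [show ∑ i ∈ Finset.range N, (C b * X : K[X]) ^ i = W from
        Finset.sum_congr rfl fun i _ => by rw [mul_pow, ← C_pow]] at hgs
      rw [hgs, mul_pow, ← C_pow, hbN, map_one, one_mul]
    set r : ℕ := (N - j) % N with hrdef
    have hrval : (j = 0 ∧ r = 0) ∨ (0 < j ∧ r = N - j) := by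
      rcases Nat.eq_zero_or_pos j with h | h
      · left
        refine ⟨h, ?_⟩
        rw [hrdef, h, Nat.sub_zero, Nat.mod_self]
      · right
        exact ⟨h, by rw [hrdef, Nat.mod_eq_of_lt (by omega)]⟩
    have hbr : b * β ^ r = 1 := by
      rcases hrval with ⟨h1, h2⟩ | ⟨h1, h2⟩
      · rw [hbdef, h1, h2, pow_zero, one_mul]
      · rw [hbdef, ← pow_add, show j + r = N by omega, hβ]
    have hbinv : C b * X - 1 = C b * (X - C (β ^ r)) := by
      rw [mul_sub, ← C_mul, hbr, map_one]
    have hb0 : b ≠ 0 := by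
      intro h
      rw [h, zero_mul] at hbr
      exact zero_ne_one hbr
    have hgevalr : gK.eval (β ^ r) ≠ 0 := by
      rw [hg, eval_prod]
      apply Finset.prod_ne_zero_iff.mpr
      intro i hi
      rw [Finset.mem_Icc] at hi
      rw [eval_mul, eval_sub, eval_sub, eval_X, eval_C, eval_C, hβinv i (by omega)]
      apply mul_ne_zero
      · rw [sub_ne_zero]
        intro h
        have := hinj r i (by omega) (by omega) h
        omega
      · rw [sub_ne_zero]
        intro h
        have := hinj r (N - i) (by omega) (by omega) h
        omega
    have hcop : IsCoprime gK (C b * X - 1) := by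
      rw [hbinv]
      apply IsCoprime.mul_right
      · exact ⟨0, C b⁻¹, by rw [zero_mul, zero_add, ← C_mul, inv_mul_cancel₀ hb0, map_one]⟩
      · exact isCoprime_of_eval_ne_zero gK _ hgevalr
    have hgW : gK ∣ W := hcop.dvd_of_dvd_mul_right (by rw [hWmul]; exact hgdvd)
    obtain ⟨f, hf⟩ := hgW
    have hf0 : f ≠ 0 := by
      intro h
      rw [h, mul_zero] at hf
      have hc : W.coeff 0 = 0 := by rw [hf, coeff_zero]
      rw [hWdef, coeff_sum_C_X, if_pos (by omega : 0 < N), pow_zero] at hc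
      exact one_ne_zero hc
    have hdegf : f.natDegree + g.natDegree < N := by
      have h1 : gK.natDegree = g.natDegree :=
        natDegree_map_eq_of_injective (algebraMap F K).injective g
      have h2 : W.natDegree < N := natDegree_sum_C_X_lt N (by omega) _
      rw [hf, natDegree_mul hgKmonic.ne_zero hf0] at h2
      omega
    have hWcoeff : ∀ i, W.coeff i =
        ∑ s ∈ Finset.range (f.natDegree + 1), f.coeff s * (X ^ s * gK).coeff i := by
      intro i
      conv_lhs => rw [hf, f.as_sum_range' (f.natDegree + 1) (Nat.lt_succ_self _),
        Finset.mul_sum]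
      rw [finset_sum_coeff]
      refine Finset.sum_congr rfl fun s _ => ?_
      have heq : gK * monomial s (f.coeff s) = Polynomial.C (f.coeff s) * (X ^ s * gK) := by
        rw [← C_mul_X_pow_eq_monomial]; ring
      rw [heq, coeff_C_mul]
    have hcm : ∀ (s i : ℕ), (X ^ s * gK : K[X]).coeff i = algebraMap F K ((X ^ s * g).coeff i) := by
      intro s i
      rw [show (X ^ s * gK : K[X]) = (X ^ s * g).map (algebraMap F K) by
        rw [Polynomial.map_mul, Polynomial.map_pow, map_X], coeff_map]
    have hinner : ∀ s : ℕ, s ≤ f.natDegree →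
        ∑ i ∈ Finset.range N, algebraMap F K (vv i) * (X ^ s * gK).coeff i = 0 := by
      intro s hs
      have hdegsg : (X ^ s * g).natDegree < N := by
        rw [natDegree_mul (pow_ne_zero s X_ne_zero) hg0, natDegree_X_pow]
        omega
      set w : Fin N → F := fun i => (X ^ s * g).coeff i with hwdef
      have hwC : w ∈ {v : Fin N → F | g ∣ ∑ i : Fin N, C (v i) * X ^ (i : ℕ)} := by
        show g ∣ ∑ i : Fin N, C (w i) * X ^ (i : ℕ)
        rw [hwdef, sum_C_coeff_X_eq N _ hdegsg]
        exact dvd_mul_left g (X ^ s)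
      have hp := hperp w hwC
      have hsum : ∑ i ∈ Finset.range N, vv i * (X ^ s * g).coeff i = 0 :=
        calc ∑ i ∈ Finset.range N, vv i * (X ^ s * g).coeff i
            = ∑ i : Fin N, vv ↑i * (X ^ s * g).coeff ↑i :=
              (Fin.sum_univ_eq_sum_range (fun n => vv n * (X ^ s * g).coeff n) N).symm
          _ = ∑ i : Fin N, v i * w i :=
              Finset.sum_congr rfl fun i _ => by rw [hvvv i]
          _ = 0 := hp
      calc ∑ i ∈ Finset.range N, algebraMap F K (vv i) * (X ^ s * gK).coeff i
          = algebraMap F K (∑ i ∈ Finset.range N, vv i * (X ^ s * g).coeff i) := by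
            rw [map_sum]
            exact Finset.sum_congr rfl fun i _ => by rw [hcm, map_mul]
        _ = 0 := by rw [hsum, map_zero]
    calc VK.eval b = ∑ i ∈ Finset.range N, algebraMap F K (vv i) * b ^ i := hVKeval b
      _ = ∑ i ∈ Finset.range N, algebraMap F K (vv i) * W.coeff i := by
          refine Finset.sum_congr rfl fun i hi => ?_
          rw [Finset.mem_range] at hi
          rw [hWdef, coeff_sum_C_X, if_pos hi]
      _ = ∑ s ∈ Finset.range (f.natDegree + 1), f.coeff s *
            (∑ i ∈ Finset.range N, algebraMap F K (vv i) * (X ^ s * gK).coeff i) := by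
          simp only [hWcoeff, Finset.mul_sum]
          rw [Finset.sum_comm]
          refine Finset.sum_congr rfl fun s _ => ?_
          exact Finset.sum_congr rfl fun i _ => by ring
      _ = 0 := by
          refine Finset.sum_eq_zero fun s hs => ?_
          rw [Finset.mem_range] at hs
          rw [hinner s (by omega), mul_zero]
  -- all N-th roots of unity are roots of VK
  have hallroots : ∀ j ∈ Finset.range N, VK.eval (β ^ j) = 0 := by
    intro j hj
    rw [Finset.mem_range] at hj
    by_cases hc : u ≤ j ∧ j ≤ N - u
    · exact hroot1 j hc.1 hc.2
    · exact hroot2 j hj (by omega)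
  have hdvdall : (∏ j ∈ Finset.range N, (X - C (β ^ j))) ∣ VK :=
    prod_X_sub_C_dvd_of_roots _ _
      (fun a ha b hb hab => hinj a b (Finset.mem_range.mp ha) (Finset.mem_range.mp hb) hab)
      VK hallroots
  have hVK0 : VK = 0 := by
    by_contra h
    have hdeg := Polynomial.natDegree_le_of_dvd hdvdall h
    rw [Polynomial.natDegree_prod_of_monic _ _ (fun i _ => monic_X_sub_C _)] at hdeg
    simp only [natDegree_X_sub_C, Finset.sum_const, Finset.card_range, smul_eq_mul,
      mul_one] at hdeg
    have hlt : VK.natDegree < N := by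
      rw [hVK]
      exact natDegree_sum_C_X_lt N (by omega) _
    omega
  have hV0 : V = 0 := by
    have := Polynomial.map_injective (algebraMap F K) (algebraMap F K).injective
    exact this (by rw [← hVKdef, hVK0, Polynomial.map_zero])
  funext i
  have hc : V.coeff ↑i = vv ↑i := by
    rw [hVdef, coeff_sum_C_X, if_pos i.isLt]
  rw [hV0, coeff_zero] at hc
  show v i = 0
  rw [← hvvv i, ← hc]
end

section
/- Let C be an [n,k] linear code over GF(r^h). Then the dual of the subfield subcode of the dual equals the trace code: ((C^⊥)|_{GF(r)})^⊥ = Tr_{r^h/r}(C), where Tr is applied componentwise. -/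
theorem stmt_18 (n : ℕ) (F K : Type) [Field F] [Field K] [Fintype F] [Fintype K]
    [Algebra F K] (C : Submodule K (Fin n → K)) :
    let dual : Set (Fin n → K) := {x | ∀ c ∈ C, ∑ i, c i * x i = 0}
    let subfieldSubcode : Set (Fin n → F) := {w | (fun i => algebraMap F K (w i)) ∈ dual}
    {v : Fin n → F | ∀ w ∈ subfieldSubcode, ∑ i, v i * w i = 0} =
      {v : Fin n → F | ∃ c ∈ C, ∀ i, v i = Algebra.trace F K (c i)} := by
  intro dual subfieldSubcode
  classical
  haveI : FiniteDimensional F K := Module.Finite.of_finite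
  -- the dot-product bilinear form on F^n
  set B : LinearMap.BilinForm F (Fin n → F) :=
    LinearMap.mk₂ F (fun v w => ∑ i, v i * w i)
      (fun v v' w => by simp [add_mul, Finset.sum_add_distrib])
      (fun a v w => by simp [Finset.mul_sum, mul_assoc])
      (fun v w w' => by simp [mul_add, Finset.sum_add_distrib])
      (fun a v w => by
        simp only [Pi.smul_apply, smul_eq_mul, Finset.mul_sum]
        exact Finset.sum_congr rfl fun i _ => by ring) with hB
  have hBapp : ∀ v w : Fin n → F, B v w = ∑ i, v i * w i := fun v w => rfl
  have hBsymm : ∀ v w : Fin n → F, B v w = B w v := by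
    intro v w; simp only [hBapp]; exact Finset.sum_congr rfl fun i _ => mul_comm _ _
  have hBrefl : B.IsRefl := fun v w h => by rw [hBsymm]; exact h
  have hBnd : B.Nondegenerate := by
    refine (LinearMap.IsRefl.nondegenerate_iff_separatingLeft hBrefl).mpr ?_
    intro v hv
    funext i
    have := hv (Pi.single i 1)
    simpa [hBapp, Pi.single_apply, Finset.sum_ite_eq'] using this
  -- the trace map, componentwise
  set tr : (Fin n → K) →ₗ[F] (Fin n → F) :=
    LinearMap.pi (fun i => (Algebra.trace F K).comp (LinearMap.proj i)) with htr
  set T : Submodule F (Fin n → F) := Submodule.map tr (C.restrictScalars F) with hT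
  -- key trace identity
  have key : ∀ (c : Fin n → K) (w : Fin n → F),
      ∑ i, Algebra.trace F K (c i) * w i
        = Algebra.trace F K (∑ i, c i * algebraMap F K (w i)) := by
    intro c w
    rw [map_sum]
    refine Finset.sum_congr rfl fun i _ => ?_
    rw [mul_comm (c i), ← Algebra.smul_def, map_smul, smul_eq_mul, mul_comm]
  -- the subfield subcode is the orthogonal of the trace code
  have hsub : subfieldSubcode = ↑(B.orthogonal T) := by
    ext w
    simp only [LinearMap.BilinForm.mem_orthogonal_iff, SetLike.mem_coe]
    constructor
    · intro hw t ht
      obtain ⟨c, hc, rfl⟩ := ht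
      show B _ w = 0
      rw [hBapp]
      have : ∀ i, tr c i = Algebra.trace F K (c i) := fun i => rfl
      simp only [this]
      rw [key]
      rw [hw c hc]
      exact map_zero _
    · intro hw c hc
      by_contra hne
      set s : K := ∑ i, c i * algebraMap F K (w i) with hs
      obtain ⟨y, hy⟩ : ∃ y : K, Algebra.trace F K y ≠ 0 := by
        by_contra h
        push_neg at h
        exact Algebra.trace_ne_zero F K (LinearMap.ext fun y => h y)
      have hc' : (y * s⁻¹) • c ∈ C := C.smul_mem _ hc
      have h1 : ∑ i, ((y * s⁻¹) • c) i * algebraMap F K (w i) = y := by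
        simp only [Pi.smul_apply, smul_eq_mul, mul_assoc, ← Finset.mul_sum, ← hs]
        field_simp
      have h2 := hw (tr ((y * s⁻¹) • c)) ⟨(y * s⁻¹) • c, hc', rfl⟩
      rw [hBapp] at h2
      have h3 : ∀ i, tr ((y * s⁻¹) • c) i = Algebra.trace F K (((y * s⁻¹) • c) i) :=
        fun i => rfl
      simp only [h3] at h2
      rw [key, h1] at h2
      exact hy h2
  -- conclude via double orthogonal
  have hdouble := LinearMap.BilinForm.orthogonal_orthogonal hBnd hBrefl T
  ext v
  simp only [Set.mem_setOf_eq]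
  constructor
  · intro hv
    have : v ∈ B.orthogonal (B.orthogonal T) := by
      rw [LinearMap.BilinForm.mem_orthogonal_iff]
      intro u hu
      have hu' : u ∈ subfieldSubcode := by rw [hsub]; exact hu
      show B u v = 0
      rw [← hBsymm, hBapp]
      exact hv u hu'
    rw [hdouble] at this
    obtain ⟨c, hc, hcv⟩ := this
    exact ⟨c, hc, fun i => by rw [← hcv]; rfl⟩
  · rintro ⟨c, hc, hvc⟩ w hw
    rw [hsub] at hw
    have : v = tr c := funext fun i => hvc i
    rw [this]
    have := hw (tr c) ⟨c, hc, rfl⟩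
    rw [hBapp] at this
    exact this
end

section
/- Let q = 2^m. The setwise stabilizer in PGL_2(GF(q^2)) of the set U_{q+1} of (q+1)-th roots of unity in PG(1, GF(q^2)) consists exactly of the linear fractional transformations of three types: (I) u ↦ u_0 u with u_0 ∈ U_{q+1}; (II) u ↦ u_0 u^{−1} with u_0 ∈ U_{q+1}; (III) u ↦ (u + c^q u_0)/(cu + u_0) with u_0 ∈ U_{q+1} and c ∈ GF(q^2)* \ U_{q+1}. -/
private lemma quad_aux {K : Type} [Field K] {α β γ u₁ u₂ u₃ : K}
    (h12 : u₁ ≠ u₂) (h13 : u₁ ≠ u₃) (h23 : u₂ ≠ u₃)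
    (e1 : α*u₁^2 + β*u₁ + γ = 0) (e2 : α*u₂^2 + β*u₂ + γ = 0)
    (e3 : α*u₃^2 + β*u₃ + γ = 0) : α = 0 ∧ β = 0 ∧ γ = 0 := by
  have hα : α = 0 := by
    have h : α * ((u₁-u₂)*((u₁-u₃)*(u₂-u₃))) = 0 := by
      linear_combination (u₂-u₃)*e1 - (u₁-u₃)*e2 + (u₁-u₂)*e3
    rcases mul_eq_zero.1 h with h' | h'
    · exact h'
    · exact absurd h' (mul_ne_zero (sub_ne_zero.2 h12)
        (mul_ne_zero (sub_ne_zero.2 h13) (sub_ne_zero.2 h23)))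
  have hβ : β = 0 := by
    have h : β * (u₁ - u₂) = 0 := by
      linear_combination e1 - e2 - (u₁^2 - u₂^2) * hα
    rcases mul_eq_zero.1 h with h' | h'
    · exact h'
    · exact absurd h' (sub_ne_zero.2 h12)
  exact ⟨hα, hβ, by linear_combination e1 - u₁^2 * hα - u₁ * hβ⟩

theorem stmt_19 (m : ℕ) (hm : 1 ≤ m) (K : Type) [Field K] [Fintype K]
    (hK : Fintype.card K = (2 ^ m) ^ 2) (a b c d : K) (hdet : a * d - b * c ≠ 0) :
    let q := 2 ^ m
    let U : Set K := {x | x ^ (q + 1) = 1}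
    ((∀ u ∈ U, c * u + d ≠ 0 ∧ (a * u + b) / (c * u + d) ∈ U) ↔
      ((∃ u₀ ∈ U, ∀ u ∈ U, (a * u + b) / (c * u + d) = u₀ * u) ∨
        (∃ u₀ ∈ U, ∀ u ∈ U, (a * u + b) / (c * u + d) = u₀ * u⁻¹) ∨
        (∃ u₀ ∈ U, ∃ c' : K, c' ≠ 0 ∧ c' ∉ U ∧
          ∀ u ∈ U, (a * u + b) / (c * u + d) = (u + c' ^ q * u₀) / (c' * u + u₀)))) := by
  intro q U
  have hq2 : 2 ≤ q := by
    have : 2^1 ≤ 2^m := Nat.pow_le_pow_right (by norm_num) hm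
    simpa using this
  have hqne : q ≠ 0 := by omega
  have hq1ne : q + 1 ≠ 0 := by omega
  -- characteristic 2
  have hp2 : ringChar K = 2 := by
    obtain ⟨n, hpr, hcard⟩ := FiniteField.card K (ringChar K)
    have hdvd : ringChar K ∣ 2 ^ (2*m) := by
      have h1 : (ringChar K) ^ (n:ℕ) = 2 ^ (2*m) := by
        rw [← hcard, hK]; ring
      exact h1 ▸ dvd_pow_self _ n.2.ne'
    have := (Nat.Prime.eq_one_or_self_of_dvd Nat.prime_two _
      (hpr.dvd_of_dvd_pow hdvd))
    rcases this with h | h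
    · exact absurd h hpr.ne_one
    · exact h
  haveI hC : CharP K 2 := hp2 ▸ ringChar.charP K
  haveI : Fact (Nat.Prime 2) := ⟨Nat.prime_two⟩
  have h2 : (2:K) = 0 := by exact_mod_cast CharP.cast_eq_zero K 2
  have hfrob : ∀ x y : K, (x+y)^q = x^q + y^q := fun x y => add_pow_char_pow x y 2 m
  have hpowq : ∀ x : K, (x^q)^q = x := by
    intro x
    have h := FiniteField.pow_card x
    rw [hK] at h
    rw [← pow_mul]
    have hqq : q*q = (2^m)^2 := by rw [pow_two]
    rw [hqq]; exact h
  have hUne : ∀ v : K, v^(q+1) = 1 → v ≠ 0 := by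
    intro v hv h0
    rw [h0, zero_pow hq1ne] at hv
    exact zero_ne_one hv
  constructor
  · -- forward
    intro hL
    -- element of order q+1
    obtain ⟨g, hg⟩ := IsCyclic.exists_generator (α := Kˣ)
    have hog : orderOf g = q^2 - 1 := by
      rw [orderOf_eq_card_of_forall_mem_zpowers hg, Nat.card_units, Nat.card_eq_fintype_card, hK]
    set h : Kˣ := g ^ (q-1) with hh
    have hfact : q^2 - 1 = (q+1)*(q-1) := by
      rcases Nat.exists_eq_add_of_le hq2 with ⟨r, hr⟩
      rw [hr]
      have e1 : (2+r)^2 = r*r + 4*r + 4 := by ring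
      have e2 : (2+r+1)*(2+r-1) = r*r + 4*r + 3 := by
        have : 2+r-1 = r+1 := by omega
        rw [this]; ring
      omega
    have hoh : orderOf h = q + 1 := by
      rw [hh, orderOf_pow, hog, hfact]
      have hgcd : ((q+1)*(q-1)).gcd (q-1) = q-1 :=
        Nat.gcd_eq_right (dvd_mul_left _ _)
      rw [hgcd, Nat.mul_div_cancel _ (by omega : 0 < q - 1)]
    have hhq : (h:K)^(q+1) = 1 := by
      have hp := pow_orderOf_eq_one h
      rw [hoh] at hp
      rw [← Units.val_pow_eq_pow_val, hp, Units.val_one]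
    have hne1 : h ≠ 1 := by
      intro h0
      have := orderOf_eq_one_iff.2 h0
      omega
    have hne2 : h^2 ≠ 1 := by
      intro h0
      have := Nat.le_of_dvd (by norm_num) (hoh ▸ orderOf_dvd_of_pow_eq_one h0)
      omega
    have d12 : (1:K) ≠ (h:K) := fun e => hne1 (Units.ext e.symm)
    have d13 : (1:K) ≠ (h:K)^2 := by
      intro e
      apply hne2
      apply Units.ext
      push_cast
      exact e.symm
    have d23 : (h:K) ≠ (h:K)^2 := by
      intro e
      apply hne1
      apply Units.ext
      have : (h:K) * 1 = (h:K) * (h:K) := by rw [mul_one, ← pow_two]; exact e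
      have := mul_left_cancel₀ (Units.ne_zero h) this
      simpa using this.symm
    have m1 : (1:K)^(q+1) = 1 := one_pow _
    have m3 : ((h:K)^2)^(q+1) = 1 := by
      rw [← pow_mul, mul_comm, pow_mul, hhq, one_pow]
    -- the quadratic equation satisfied by all u ∈ U
    have hEqU : ∀ u : K, u^(q+1) = 1 →
        (a*b^q - c*d^q)*u^2 + ((a^q*a + b^q*b) - (c^q*c + d^q*d))*u + (a^q*b - c^q*d) = 0 := by
      intro u hu
      have huq : u^q * u = 1 := by rw [← pow_succ]; exact hu
      obtain ⟨hden, hmem⟩ := hL u hu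
      have hmem' : (a*u+b)^(q+1) = (c*u+d)^(q+1) := by
        have hm1 : ((a*u+b)/(c*u+d))^(q+1) = 1 := hmem
        rw [div_pow, div_eq_one_iff_eq (pow_ne_zero _ hden)] at hm1
        exact hm1
      have hN : (a*u+b)^(q+1) * u = a*b^q*u^2 + (a^q*a + b^q*b)*u + a^q*b := by
        rw [pow_succ, hfrob (a*u) b, mul_pow]
        linear_combination (a^q*a*u + a^q*b) * huq
      have hD : (c*u+d)^(q+1) * u = c*d^q*u^2 + (c^q*c + d^q*d)*u + c^q*d := by
        rw [pow_succ, hfrob (c*u) d, mul_pow]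
        linear_combination (c^q*c*u + c^q*d) * huq
      linear_combination hD - hN + u * hmem'
    obtain ⟨hA, hB, hG⟩ := quad_aux d12 d13 d23 (hEqU 1 m1) (hEqU _ hhq) (hEqU _ m3)
    have E1 : a*b^q = c*d^q := sub_eq_zero.1 hA
    have E3 : a^q*a + b^q*b = c^q*c + d^q*d := sub_eq_zero.1 hB
    have E2 : a^q*b = c^q*d := sub_eq_zero.1 hG
    by_cases hc : c = 0
    · -- type I
      subst hc
      have ha : a ≠ 0 := by intro h0; exact hdet (by rw [h0]; ring)
      have hd : d ≠ 0 := by intro h0; exact hdet (by rw [h0]; ring)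
      have hb : b = 0 := by
        rw [zero_mul] at E1
        rcases mul_eq_zero.1 E1 with h' | h'
        · exact absurd h' ha
        · exact (pow_eq_zero_iff hqne).1 h'
      subst hb
      left
      refine ⟨a/d, ?_, ?_⟩
      · show (a/d)^(q+1) = 1
        rw [div_pow, div_eq_one_iff_eq (pow_ne_zero _ hd), pow_succ, pow_succ]
        simp only [zero_pow hqne, zero_mul, mul_zero, add_zero, zero_add] at E3
        exact E3
      · intro u hu
        rw [zero_mul, zero_add, add_zero, div_mul_eq_mul_div]
    · by_cases ha : a = 0
      · -- type II
        subst ha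
        have hb : b ≠ 0 := by intro h0; exact hdet (by rw [h0]; ring)
        have hd : d = 0 := by
          rw [zero_pow hqne, zero_mul] at E2
          rcases mul_eq_zero.1 E2.symm with h' | h'
          · exact absurd h' (pow_ne_zero _ hc)
          · exact h'
        subst hd
        right; left
        refine ⟨b/c, ?_, ?_⟩
        · show (b/c)^(q+1) = 1
          rw [div_pow, div_eq_one_iff_eq (pow_ne_zero _ hc), pow_succ, pow_succ]
          linear_combination E3
        · intro u hu
          have hu0 : u ≠ 0 := hUne u hu
          field_simp
          ring
      · -- type III
        have hd : d ≠ 0 := by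
          intro h0
          have hb : b = 0 := by
            rw [h0, mul_zero] at E2
            rcases mul_eq_zero.1 E2 with h' | h'
            · exact absurd h' (pow_ne_zero _ ha)
            · exact h'
          exact hdet (by rw [h0, hb]; ring)
        have hACne : a^q*a ≠ c^q*c := by
          intro hEqAC
          apply hdet
          have hkey : (a*d - b*c) * a^q = (a^q*a - c^q*c) * d := by
            linear_combination (-c) * E2
          rw [hEqAC, sub_self, zero_mul] at hkey
          rcases mul_eq_zero.1 hkey with h' | h'
          · exact h'
          · exact absurd h' (pow_ne_zero _ ha)
        have hABCD : (a^q*a)*(b^q*b) = (c^q*c)*(d^q*d) := by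
          linear_combination (a^q*b)*E1 + (c*d^q)*E2
        have hADkey : (a^q*a - c^q*c) * (a^q*a - d^q*d) = 0 := by
          linear_combination (a^q*a)*E3 - hABCD
        have hAD : a^q*a = d^q*d := by
          rcases mul_eq_zero.1 hADkey with h' | h'
          · exact absurd (sub_eq_zero.1 h') hACne
          · exact sub_eq_zero.1 h'
        right; right
        refine ⟨d/a, ?_, c/a, div_ne_zero hc ha, ?_, ?_⟩
        · show (d/a)^(q+1) = 1
          rw [div_pow, div_eq_one_iff_eq (pow_ne_zero _ ha), pow_succ, pow_succ]
          linear_combination -hAD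
        · intro hmem
          have hmem' : (c/a)^(q+1) = 1 := hmem
          rw [div_pow, div_eq_one_iff_eq (pow_ne_zero _ ha), pow_succ, pow_succ] at hmem'
          exact hACne hmem'.symm
        · intro u hu
          obtain ⟨hden, -⟩ := hL u hu
          have hden2 : (c/a)*u + d/a ≠ 0 := by
            intro h0
            apply hden
            have h1 : ((c/a)*u + d/a) * a = c*u + d := by field_simp
            rw [h0, zero_mul] at h1
            exact h1.symm
          rw [div_pow]
          have hden' : u*c + d ≠ 0 := by rwa [mul_comm]
          field_simp
          linear_combination E2
  · -- backward
    intro hR u hu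
    have hu' : u^(q+1) = 1 := hu
    have hune : u ≠ 0 := hUne u hu'
    rcases hR with ⟨u₀, hu₀, hmap⟩ | ⟨u₀, hu₀, hmap⟩ | ⟨u₀, hu₀, c', hc'0, hc'U, hmap⟩
    · have hu₀' : u₀^(q+1) = 1 := hu₀
      have hval : (u₀*u)^(q+1) = 1 := by rw [mul_pow, hu₀', hu', one_mul]
      have hvne : u₀*u ≠ 0 := hUne _ hval
      have hden : c*u + d ≠ 0 := by
        intro h0
        have he := hmap u hu
        rw [h0, div_zero] at he
        exact hvne he.symm
      exact ⟨hden, by rw [hmap u hu]; exact hval⟩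
    · have hu₀' : u₀^(q+1) = 1 := hu₀
      have hval : (u₀*u⁻¹)^(q+1) = 1 := by
        rw [mul_pow, hu₀', inv_pow, hu', inv_one, one_mul]
      have hvne : u₀*u⁻¹ ≠ 0 := hUne _ hval
      have hden : c*u + d ≠ 0 := by
        intro h0
        have he := hmap u hu
        rw [h0, div_zero] at he
        exact hvne he.symm
      exact ⟨hden, by rw [hmap u hu]; exact hval⟩
    · have hu₀' : u₀^(q+1) = 1 := hu₀
      have hu₀ne : u₀ ≠ 0 := hUne u₀ hu₀'
      have hdenne : c'*u + u₀ ≠ 0 := by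
        intro h0
        apply hc'U
        show c'^(q+1) = 1
        have hcu : c'*u = u₀ := by linear_combination h0 - u₀*h2
        have h1 : (c'*u)^(q+1) = u₀^(q+1) := by rw [hcu]
        rw [mul_pow, hu', mul_one, hu₀'] at h1
        exact h1
      have huq : u^q = u⁻¹ := eq_inv_of_mul_eq_one_left (by rw [← pow_succ]; exact hu')
      have hu₀q : u₀^q = u₀⁻¹ := eq_inv_of_mul_eq_one_left (by rw [← pow_succ]; exact hu₀')
      have hN : (u + c'^q*u₀)^(q+1) = (c'*u + u₀)^(q+1) := by
        rw [pow_succ, pow_succ, hfrob u (c'^q*u₀), hfrob (c'*u) u₀, mul_pow, mul_pow,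
          hpowq c', huq, hu₀q]
        field_simp
        ring
      have hval : ((u + c'^q*u₀)/(c'*u + u₀))^(q+1) = 1 := by
        rw [div_pow, hN, div_self (pow_ne_zero _ hdenne)]
      have hvne : (u + c'^q*u₀)/(c'*u + u₀) ≠ 0 := hUne _ hval
      have hden : c*u + d ≠ 0 := by
        intro h0
        have he := hmap u hu
        rw [h0, div_zero] at he
        exact hvne he.symm
      exact ⟨hden, by rw [hmap u hu]; exact hval⟩
end
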